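/- arXiv:0706.3620 — 6 statements merged into one kernel-verified Lean document; each statement's English description precedes it below -/
import Mathlib

section
/- Suppose x ∈ 𝒟 satisfies p_n(x) ≥ 0 for all n ∈ ℕ₀ (i.e. α_x is a positive character) and there exists exactly one α_x-mean on ℓ∞(ℕ₀). Then p_n(x) = 1 for all n ∈ ℕ₀, i.e. α_x is the constant character 1. -/
open Filter Topology MeasureTheory

noncomputable section

/-- `m` is an `α`-mean on `ℓ∞(ℕ₀)` for the polynomial hypergroup with
linearization coefficients `g`: `m(α) = 1` and `m(T_n f) = α(n) · m(f)` for all `n`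
and all bounded `f`, where `(T_n f)(k) = Σ_{j≤n+k} g(n,k,j) f(j)`. -/
def IsAlphaMean (g : ℕ → ℕ → ℕ → ℝ) (α : BoundedContinuousFunction ℕ ℝ)
    (m : BoundedContinuousFunction ℕ ℝ →L[ℝ] ℝ) : Prop :=
  m α = 1 ∧
    ∀ (n : ℕ) (f Tf : BoundedContinuousFunction ℕ ℝ),
      (∀ k : ℕ, Tf k = ∑ j ∈ Finset.range (n + k + 1), g n k j * f j) →
      m Tf = α n * m f

/-- The support of a measure on `ℝ`: the points all of whose open
neighbourhoods have positive measure. -/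
def measSupport (μ : Measure ℝ) : Set ℝ :=
  {y : ℝ | ∀ U : Set ℝ, IsOpen U → y ∈ U → 0 < μ U}

set_option maxHeartbeats 2000000 in
theorem stmt3    (a b c : ℕ → ℝ)
    (ha : ∀ n : ℕ, 0 < a n) (hc : ∀ n : ℕ, 1 ≤ n → 0 < c n)
    (p : ℕ → ℝ → ℝ)
    (hp0 : ∀ y : ℝ, p 0 y = 1)
    (hp1 : ∀ y : ℝ, p 1 y = (y - b 0) / a 0)
    (hrec : ∀ n : ℕ, 1 ≤ n → ∀ y : ℝ,
      p 1 y * p n y = a n * p (n + 1) y + b n * p n y + c n * p (n - 1) y)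
    (hnorm : ∀ n : ℕ, p n 1 = 1)
    (g : ℕ → ℕ → ℕ → ℝ)
    (hg : ∀ n k : ℕ, ∀ y : ℝ,
      p n y * p k y = ∑ j ∈ Finset.range (n + k + 1), g n k j * p j y)
    (hgnn : ∀ n k j : ℕ, 0 ≤ g n k j)
    (μ : Measure ℝ) [IsProbabilityMeasure μ]
    (hcsupp : ∃ K : Set ℝ, IsCompact K ∧ μ Kᶜ = 0)
    (horth : ∀ n k : ℕ, n ≠ k → ∫ y, p n y * p k y ∂μ = 0)
    (h : ℕ → ℝ)
    (hh : ∀ n : ℕ, h n = (∫ y, (p n y) ^ 2 ∂μ)⁻¹)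
    (x : ℝ) (αx : BoundedContinuousFunction ℕ ℝ)
    (hαx : ∀ n : ℕ, αx n = p n x)
    (hpos : ∀ n : ℕ, 0 ≤ p n x)
    (huniq : ∃! m : BoundedContinuousFunction ℕ ℝ →L[ℝ] ℝ, IsAlphaMean g αx m) :
    ∀ n : ℕ, p n x = 1 := by

  -- abbreviation s n := p n x used informally
  have hs0 : p 0 x = 1 := hp0 x
  -- sum of a,b,c equals 1
  have habc : ∀ n : ℕ, 1 ≤ n → a n + b n + c n = 1 := by
    intro n hn
    have h1 := hrec n hn 1
    rw [hnorm, hnorm, hnorm, hnorm] at h1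
    linarith
  -- continuity of p n
  have pcont : ∀ n, Continuous (p n) := by
    have h2 : ∀ n, Continuous (p n) ∧ Continuous (p (n+1)) := by
      intro n
      induction n with
      | zero =>
        constructor
        · have : p 0 = fun _ : ℝ => (1:ℝ) := funext hp0
          rw [this]; exact continuous_const
        · have : p 1 = fun y : ℝ => (y - b 0) / a 0 := funext hp1
          rw [this]
          exact (continuous_id.sub continuous_const).div_const _
      | succ n ih =>
        refine ⟨ih.2, ?_⟩
        have hrw : p (n+1+1) = fun y =>
            (p 1 y * p (n+1) y - b (n+1) * p (n+1) y - c (n+1) * p n y) / a (n+1) := by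
          funext y
          have h := hrec (n+1) (by omega) y
          have hn : n + 1 - 1 = n := rfl
          rw [hn] at h
          rw [eq_div_iff (ha (n+1)).ne']
          linarith
        rw [hrw]
        have c1 : Continuous (p 1) := by
          have : p 1 = fun y : ℝ => (y - b 0) / a 0 := funext hp1
          rw [this]; exact (continuous_id.sub continuous_const).div_const _
        exact (((c1.mul ih.2).sub (continuous_const.mul ih.2)).sub
          (continuous_const.mul ih.1)).div_const _
    exact fun n => (h2 n).1
  -- integrability of continuous functions
  obtain ⟨K, hKc, hK0⟩ := hcsupp
  have integ : ∀ f : ℝ → ℝ, Continuous f → Integrable f μ := by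
    intro f hf
    obtain ⟨C, hC⟩ := hKc.exists_bound_of_continuousOn hf.continuousOn
    refine Integrable.mono' (integrable_const C) hf.aestronglyMeasurable ?_
    refine (ae_iff).2 (measure_mono_null ?_ hK0)
    intro y hy
    simp only [Set.mem_setOf_eq, not_le] at hy
    intro hyK
    exact absurd (hC y hyK) (not_le.2 hy)
  have pint : ∀ n k, Integrable (fun y => p n y * p k y) μ :=
    fun n k => integ _ ((pcont n).mul (pcont k))
  have pint3 : ∀ n k j, Integrable (fun y => p n y * p k y * p j y) μ :=
    fun n k j => integ _ (((pcont n).mul (pcont k)).mul (pcont j))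
  -- τ n := ∫ p_n ^ 2
  set τ : ℕ → ℝ := fun n => ∫ y, p n y * p n y ∂μ with hτ
  have ip : ∀ i j : ℕ, ∫ y, p i y * p j y ∂μ = if i = j then τ i else 0 := by
    intro i j
    by_cases hij : i = j
    · subst hij; simp [hτ]
    · simp [hij, horth i j hij]
  have ip0 : ∀ i : ℕ, ∫ y, p i y ∂μ = if i = 0 then 1 else 0 := by
    intro i
    by_cases hi : i = 0
    · subst hi
      have : (fun y => p 0 y) = fun _ : ℝ => (1:ℝ) := funext hp0
      rw [this]
      simp
    · have h1 : (fun y => p i y) = fun y => p i y * p 0 y := by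
        funext y; rw [hp0]; ring
      rw [h1, horth i 0 hi]
      simp [hi]
  have τ0 : τ 0 = 1 := by
    have h1 : τ 0 = ∫ _y, (1:ℝ) ∂μ := by
      rw [show τ 0 = ∫ y, p 0 y * p 0 y ∂μ from rfl]
      congr 1; funext y; rw [hp0]; ring
    rw [h1]; simp
  -- triple product integrals via the recurrence
  have triple : ∀ k, 1 ≤ k → ∀ j, ∫ y, p 1 y * p k y * p j y ∂μ
      = a k * (if k+1 = j then τ (k+1) else 0) + b k * (if k = j then τ k else 0)
        + c k * (if k-1 = j then τ (k-1) else 0) := by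
    intro k hk j
    have hfun : (fun y => p 1 y * p k y * p j y)
        = fun y => a k * (p (k+1) y * p j y) + b k * (p k y * p j y)
          + c k * (p (k-1) y * p j y) := by
      funext y
      have h := hrec k hk y
      rw [show p 1 y * p k y * p j y = (p 1 y * p k y) * p j y from rfl, h]
      ring
    rw [hfun]
    have i1 : Integrable (fun y => a k * (p (k+1) y * p j y) + b k * (p k y * p j y)) μ :=
      ((pint (k+1) j).const_mul _).add ((pint k j).const_mul _)
    rw [integral_add i1 ((pint (k-1) j).const_mul _),
      integral_add ((pint (k+1) j).const_mul _) ((pint k j).const_mul _),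
      integral_const_mul, integral_const_mul, integral_const_mul, ip, ip, ip]
  have τ1 : τ 1 = c 1 := by
    have h0 := triple 1 le_rfl 0
    norm_num at h0
    have hfun0 : (fun y => p 1 y * p 1 y * p 0 y) = fun y => p 1 y * p 1 y := by
      funext y; rw [hp0]; ring
    rw [hfun0] at h0
    rw [show τ 1 = ∫ y, p 1 y * p 1 y ∂μ from rfl, h0, τ0]
    ring
  have τrec : ∀ n, 1 ≤ n → a n * τ (n+1) = c (n+1) * τ n := by
    intro n hn
    have h1 := triple n hn (n+1)
    have h2 := triple (n+1) (by omega) n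
    have hfun : (fun y => p 1 y * p (n+1) y * p n y) = fun y => p 1 y * p n y * p (n+1) y := by
      funext y; ring
    rw [hfun] at h2
    rw [if_pos rfl, if_neg (show ¬(n = n+1) by omega),
      if_neg (show ¬(n-1 = n+1) by omega)] at h1
    rw [if_neg (show ¬(n+1+1 = n) by omega), if_neg (show ¬(n+1 = n) by omega),
      if_pos (show n+1-1 = n by omega), show n+1-1 = n by omega] at h2
    rw [h2] at h1
    linarith
  have τpos : ∀ n, 0 < τ n := by
    have key : ∀ n, 0 < τ n ∧ 0 < τ (n+1) := by
      intro n
      induction n with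
      | zero => exact ⟨by rw [τ0]; norm_num, by rw [τ1]; exact hc 1 le_rfl⟩
      | succ n ih =>
        refine ⟨ih.2, ?_⟩
        have h := τrec (n+1) (by omega)
        have : τ (n+1+1) = c (n+2) * τ (n+1) / a (n+1) := by
          rw [eq_div_iff (ha (n+1)).ne']; linarith
        rw [this]
        exact div_pos (mul_pos (hc (n+2) (by omega)) ih.2) (ha (n+1))
    exact fun n => (key n).1
  -- ∫ p_n p_k p_j = g n k j * τ j   for j in range
  have hgInt : ∀ n k j : ℕ, j < n + k + 1 →
      ∫ y, p n y * p k y * p j y ∂μ = g n k j * τ j := by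
    intro n k j hj
    have hfun : (fun y => p n y * p k y * p j y)
        = fun y => ∑ i ∈ Finset.range (n+k+1), g n k i * (p i y * p j y) := by
      funext y
      rw [show p n y * p k y * p j y = (p n y * p k y) * p j y from rfl, hg n k y,
        Finset.sum_mul]
      exact Finset.sum_congr rfl fun i _ => by ring
    rw [hfun, integral_finset_sum _ (fun i _ => (pint i j).const_mul _)]
    have : ∀ i ∈ Finset.range (n+k+1),
        ∫ y, g n k i * (p i y * p j y) ∂μ = if i = j then g n k i * τ i else 0 := by
      intro i _
      rw [integral_const_mul, ip]
      by_cases hij : i = j <;> simp [hij]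
    rw [Finset.sum_congr rfl this, Finset.sum_ite_eq' (Finset.range (n+k+1)) j
      (fun i => g n k i * τ i), if_pos (Finset.mem_range.2 hj)]
  -- identifications of g 1 k j
  have gval1 : ∀ k, 1 ≤ k → g 1 k (k+1) = a k := by
    intro k hk
    have h := hgInt 1 k (k+1) (by omega)
    rw [triple k hk (k+1), if_pos rfl, if_neg (show ¬(k = k+1) by omega),
      if_neg (show ¬(k-1 = k+1) by omega)] at h
    have := (τpos (k+1)).ne'
    field_simp at h
    rcases mul_eq_mul_left_iff.1 (show τ (k+1) * a k = τ (k+1) * g 1 k (k+1) by linarith) with h | h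
    · exact h.symm
    · exact absurd h this
  have gval2 : ∀ k, 1 ≤ k → g 1 k k = b k := by
    intro k hk
    have h := hgInt 1 k k (by omega)
    rw [triple k hk k, if_neg (show ¬(k+1 = k) by omega), if_pos rfl,
      if_neg (show ¬(k-1 = k) by omega)] at h
    have := (τpos k).ne'
    field_simp at h
    rcases mul_eq_mul_left_iff.1 (show τ k * b k = τ k * g 1 k k by linarith) with h | h
    · exact h.symm
    · exact absurd h this
  have gval3 : ∀ k, 1 ≤ k → g 1 k (k-1) = c k := by
    intro k hk
    have h := hgInt 1 k (k-1) (by omega)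
    rw [triple k hk (k-1), if_neg (show ¬(k+1 = k-1) by omega),
      if_neg (show ¬(k = k-1) by omega), if_pos rfl] at h
    have := (τpos (k-1)).ne'
    field_simp at h
    rcases mul_eq_mul_left_iff.1 (show τ (k-1) * c k = τ (k-1) * g 1 k (k-1) by linarith) with h | h
    · exact h.symm
    · exact absurd h this
  have gval0 : ∀ k j, 1 ≤ k → j + 2 ≤ k → g 1 k j = 0 := by
    intro k j hk hj
    have h := hgInt 1 k j (by omega)
    rw [triple k hk j, if_neg (show ¬(k+1 = j) by omega),
      if_neg (show ¬(k = j) by omega), if_neg (show ¬(k-1 = j) by omega)] at h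
    have := (τpos j).ne'
    simp only [mul_zero, zero_add, add_zero] at h
    rcases mul_eq_zero.1 h.symm with h' | h'
    · exact h'
    · exact absurd h' this
  have g00 : g 1 0 0 = 0 := by
    have h := hgInt 1 0 0 (by omega)
    have hfun : (fun y => p 1 y * p 0 y * p 0 y) = fun y => p 1 y := by
      funext y; rw [hp0]; ring
    rw [hfun, ip0, τ0] at h
    simpa using h.symm
  have g01 : g 1 0 1 = 1 := by
    have h := hgInt 1 0 1 (by omega)
    have hfun : (fun y => p 1 y * p 0 y * p 1 y) = fun y => p 1 y * p 1 y := by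
      funext y; rw [hp0]; ring
    rw [hfun] at h
    have h2 : g 1 0 1 * τ 1 = 1 * τ 1 := by rw [one_mul]; exact h.symm
    exact mul_right_cancel₀ (τpos 1).ne' h2
  -- sum of g's equals 1
  have gsum : ∀ n k : ℕ, ∑ j ∈ Finset.range (n+k+1), g n k j = 1 := by
    intro n k
    have h := hg n k 1
    rw [hnorm, hnorm] at h
    have : ∑ j ∈ Finset.range (n+k+1), g n k j * p j 1
        = ∑ j ∈ Finset.range (n+k+1), g n k j :=
      Finset.sum_congr rfl fun j _ => by rw [hnorm, mul_one]
    rw [this] at h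
    linarith
  have a_le : ∀ k, 1 ≤ k → a k ≤ 1 := by
    intro k hk
    rw [← gval1 k hk, ← gsum 1 k]
    exact Finset.single_le_sum (fun i _ => hgnn 1 k i) (Finset.mem_range.2 (by omega))
  -- character equation at x ; positivity of p n x
  have sτle : ∀ j : ℕ, τ j ≤ p j x * p j x := by
    intro j
    have hgjj : g j j 0 = τ j := by
      have h := hgInt j j 0 (by omega)
      have hfun : (fun y => p j y * p j y * p 0 y) = fun y => p j y * p j y := by
        funext y; rw [hp0]; ring
      rw [hfun, τ0, mul_one] at h
      exact h.symm
    have h := hg j j x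
    have hle : g j j 0 * p 0 x ≤ ∑ i ∈ Finset.range (j+j+1), g j j i * p i x :=
      Finset.single_le_sum (fun i _ => mul_nonneg (hgnn j j i) (hpos i))
        (Finset.mem_range.2 (by omega))
    rw [hs0, mul_one, hgjj] at hle
    linarith
  have spos : ∀ j : ℕ, 0 < p j x := by
    intro j
    rcases (hpos j).lt_or_eq with h' | h'
    · exact h'
    · exfalso
      have := sτle j
      rw [← h'] at this
      have := τpos j
      nlinarith
  -- the Δ relation
  have Drel : ∀ n, 1 ≤ n → a n * (p (n+1) x - p n x)
      = (p 1 x - 1) * p n x + c n * (p n x - p (n-1) x) := by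
    intro n hn
    have h := hrec n hn x
    have h2 := habc n hn
    linear_combination (-1 : ℝ) * h - p n x * h2
  -- bound on p n x
  have sbd : ∀ n : ℕ, p n x ≤ ‖αx‖ := by
    intro n
    have := αx.norm_coe_le_norm n
    rw [hαx n] at this
    exact (abs_le.1 (by simpa using this)).2
  -- main case split
  rcases lt_trichotomy (p 1 x) 1 with hlt | heq | hgt
  · -- p 1 x < 1 : contradiction with existence of the mean
    exfalso
    have sdec : ∀ n : ℕ, p (n+1) x - p n x < 0 := by
      intro n
      induction n with
      | zero =>
        have : p (0+1) x = p 1 x := rfl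
        rw [this, hs0]; linarith
      | succ n ih =>
        have h := Drel (n+1) (by omega)
        rw [show n+1-1 = n by omega] at h
        have h1 : a (n+1) * (p (n+1+1) x - p (n+1) x) < 0 := by
          have t1 : (p 1 x - 1) * p (n+1) x < 0 :=
            mul_neg_of_neg_of_pos (by linarith) (spos (n+1))
          have t2 : c (n+1) * (p (n+1) x - p n x) ≤ 0 :=
            mul_nonpos_of_nonneg_of_nonpos (hc (n+1) (by omega)).le (by linarith)
          linarith
        nlinarith [ha (n+1)]
    have smono : ∀ i j : ℕ, i ≤ j → p j x ≤ p i x := by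
      intro i j hij
      have hanti : Antitone (fun n : ℕ => p n x) :=
        antitone_nat_of_succ_le (fun n => by have := sdec n; show p (n+1) x ≤ p n x; linarith)
      exact hanti hij
    have stend : ∀ ε : ℝ, 0 < ε → ∃ N, p N x < ε := by
      intro ε hε
      by_contra hcon
      push_neg at hcon
      have step : ∀ n, 1 ≤ n → p (n+1) x - p n x ≤ (p 1 x - 1) * ε := by
        intro n hn
        have h := Drel n hn
        have hcn : c n * (p n x - p (n-1) x) ≤ 0 :=
          mul_nonpos_of_nonneg_of_nonpos (hc n hn).le
            (by linarith [smono (n-1) n (by omega)])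
        have hds : (p 1 x - 1) * p n x ≤ (p 1 x - 1) * ε := by
          have := mul_le_mul_of_nonpos_left (hcon n) (show p 1 x - 1 ≤ 0 by linarith)
          linarith [this]
        have h2 : a n * (p (n+1) x - p n x) ≤ (p 1 x - 1) * ε := by linarith
        have hΔ : p (n+1) x - p n x < 0 := sdec n
        have h3 : p (n+1) x - p n x ≤ a n * (p (n+1) x - p n x) := by
          nlinarith [ha n, a_le n hn]
        linarith
      have grow2 : ∀ n : ℕ, p (n+1) x ≤ p 1 x + (n:ℝ) * ((p 1 x - 1) * ε) := by
        intro n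
        induction n with
        | zero => norm_num
        | succ n ih =>
          have h := step (n+1) (by omega)
          push_cast
          push_cast at ih
          linarith
      have hκ : (p 1 x - 1) * ε < 0 := mul_neg_of_neg_of_pos (by linarith) hε
      obtain ⟨n, hn⟩ := exists_nat_gt (p 1 x / (-((p 1 x - 1) * ε)))
      have h1 := (div_lt_iff₀ (by linarith : (0:ℝ) < -((p 1 x - 1) * ε))).1 hn
      have := grow2 n
      have := spos (n+1)
      nlinarith
    -- the mean
    obtain ⟨m, hm, -⟩ := huniq
    -- delta functions as bounded continuous functions
    set δ : ℕ → BoundedContinuousFunction ℕ ℝ := fun j =>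
      BoundedContinuousFunction.ofNormedAddCommGroup
        (fun k => if k = j then (1:ℝ) else 0) continuous_of_discreteTopology 1
        (fun k => by by_cases hk : k = j <;> simp [hk]) with hδ
    have δval : ∀ j k : ℕ, (δ j) k = if k = j then (1:ℝ) else 0 := by
      intro j k; rw [hδ]; rfl
    have δnorm : ∀ j, ‖δ j‖ ≤ 1 := by
      intro j; rw [hδ]
      exact BoundedContinuousFunction.norm_ofNormedAddCommGroup_le _ zero_le_one _
    set w : ℕ → ℝ := fun j => m (δ j) with hw
    have hwdef : ∀ j, m (δ j) = w j := fun j => rfl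
    -- the translated delta sums
    have sumδ : ∀ k j : ℕ, (∑ i ∈ Finset.range (1+k+1), g 1 k i * (δ j) i)
        = if j ≤ k+1 then g 1 k j else 0 := by
      intro k j
      have h1 : ∀ i ∈ Finset.range (1+k+1), g 1 k i * (δ j) i
          = if i = j then g 1 k i else 0 := by
        intro i _
        rw [δval]
        by_cases hij : i = j <;> simp [hij]
      rw [Finset.sum_congr rfl h1, Finset.sum_ite_eq' _ j (g 1 k)]
      by_cases hj : j ≤ k+1
      · rw [if_pos (Finset.mem_range.2 (by omega)), if_pos hj]
      · rw [if_neg (fun hmem => hj (by have := Finset.mem_range.1 hmem; omega)),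
          if_neg hj]
    -- mean equation at 0
    have E0 : p 1 x * w 0 = c 1 * w 1 := by
      have hside : ∀ k : ℕ, (c 1 • δ 1) k = ∑ i ∈ Finset.range (1+k+1), g 1 k i * (δ 0) i := by
        intro k
        rw [sumδ k 0, if_pos (by omega)]
        simp only [BoundedContinuousFunction.coe_smul, Pi.smul_apply, smul_eq_mul, δval]
        match k with
        | 0 => rw [g00]; norm_num
        | 1 => rw [show g 1 1 0 = c 1 from by
                  have := gval3 1 le_rfl; simpa using this]
               norm_num
        | (k+2) => rw [gval0 (k+2) 0 (by omega) (by omega)]; simp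
      have h := hm.2 1 (δ 0) (c 1 • δ 1) hside
      rw [hαx 1, ContinuousLinearMap.map_smul, smul_eq_mul, hwdef, hwdef] at h
      linarith [h]
    -- mean equations at j+1
    have Esucc : ∀ j : ℕ, p 1 x * w (j+1)
        = (if j = 0 then (1:ℝ) else a j) * w j + b (j+1) * w (j+1) + c (j+2) * w (j+2) := by
      intro j
      set A : ℝ := if j = 0 then (1:ℝ) else a j with hA
      have hgA : g 1 j (j+1) = A := by
        rw [hA]
        by_cases hj : j = 0
        · subst hj; rw [if_pos rfl]; exact g01
        · rw [if_neg hj]; exact gval1 j (by omega)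
      have hside : ∀ k : ℕ,
          (A • δ j + b (j+1) • δ (j+1) + c (j+2) • δ (j+2)) k
          = ∑ i ∈ Finset.range (1+k+1), g 1 k i * (δ (j+1)) i := by
        intro k
        rw [sumδ k (j+1)]
        simp only [BoundedContinuousFunction.coe_add, BoundedContinuousFunction.coe_smul,
          Pi.add_apply, Pi.smul_apply, smul_eq_mul, δval]
        rcases lt_trichotomy k j with hk | hk | hk
        · rw [if_neg (by omega), if_neg (by omega), if_neg (by omega), if_neg (by omega)]
          ring
        · subst hk
          rw [if_pos rfl, if_neg (by omega), if_neg (by omega), if_pos (by omega), hgA]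
          ring
        · rcases lt_trichotomy k (j+1) with hk2 | hk2 | hk2
          · omega
          · subst hk2
            rw [if_neg (by omega), if_pos rfl, if_neg (by omega), if_pos (by omega),
              gval2 (j+1) (by omega)]
            ring
          · rcases lt_trichotomy k (j+2) with hk3 | hk3 | hk3
            · omega
            · subst hk3
              rw [if_neg (by omega), if_neg (by omega), if_pos rfl, if_pos (by omega)]
              rw [show g 1 (j+2) (j+1) = c (j+2) from by
                have := gval3 (j+2) (by omega)
                rwa [show j+2-1 = j+1 by omega] at this]
              ring
            · rw [if_neg (by omega), if_neg (by omega), if_neg (by omega)]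
              by_cases hk4 : j + 1 ≤ k + 1
              · rw [if_pos hk4, gval0 k (j+1) (by omega) (by omega)]; ring
              · rw [if_neg hk4]; ring
      have h := hm.2 1 (δ (j+1)) _ hside
      rw [hαx 1, map_add, map_add, ContinuousLinearMap.map_smul,
        ContinuousLinearMap.map_smul, ContinuousLinearMap.map_smul, smul_eq_mul,
        smul_eq_mul, smul_eq_mul, hwdef, hwdef, hwdef] at h
      linarith [h]
    -- closed form for w
    have wprop : ∀ j, w j * τ j = w 0 * p j x := by
      have key : ∀ j, w j * τ j = w 0 * p j x ∧ w (j+1) * τ (j+1) = w 0 * p (j+1) x := by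
        intro j
        induction j with
        | zero =>
          constructor
          · rw [τ0, hs0]
          · rw [τ1]
            have : p (0+1) x = p 1 x := rfl
            rw [this]
            linarith [E0]
        | succ j ih =>
          refine ⟨ih.2, ?_⟩
          have E := Esucc j
          have Cj := ih.1
          have Cj1 := ih.2
          have r2 := τrec (j+1) (by omega)
          have hx := hrec (j+1) (by omega) x
          rw [show j+1-1 = j by omega] at hx
          have key1 : c (j+2) * τ (j+1) * w (j+2) = a (j+1) * (w 0 * p (j+2) x) := by
            by_cases hj : j = 0
            · subst hj
              rw [if_pos rfl] at E
              have hτ1 : τ 1 = c 1 := τ1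
              have hx0 : p 0 x = 1 := hs0
              linear_combination (-(τ 1)) * E + (p 1 x - b 1) * Cj1 - (w 0) * hτ1
                + (w 0) * hx + (c 1 * w 0) * hx0
            · have r1 := τrec j (by omega)
              rw [if_neg hj] at E
              linear_combination (-(τ (j+1))) * E + (p 1 x - b (j+1)) * Cj1 - (w j) * r1
                - (c (j+1)) * Cj + (w 0) * hx
          have hmul : (c (j+2) * τ (j+1)) * (w (j+1+1) * τ (j+1+1))
              = (c (j+2) * τ (j+1)) * (w 0 * p (j+1+1) x) := by
            linear_combination (τ (j+2)) * key1 + (w 0 * p (j+2) x) * r2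
          exact mul_left_cancel₀ (mul_pos (hc (j+2) (by omega)) (τpos (j+1))).ne' hmul
      exact fun j => (key j).1
    -- w 0 must vanish
    have hbd : ∀ j, |w j| ≤ ‖m‖ := by
      intro j
      have h1 := m.le_opNorm (δ j)
      have h2 : ‖m (δ j)‖ ≤ ‖m‖ * 1 :=
        le_trans h1 (mul_le_mul_of_nonneg_left (δnorm j) (norm_nonneg m))
      rw [mul_one, Real.norm_eq_abs] at h2
      exact h2
    have w0zero : w 0 = 0 := by
      by_contra hw0
      obtain ⟨N, hN⟩ := stend (|w 0| / (‖m‖ + 1))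
        (div_pos (abs_pos.2 hw0) (by positivity))
      have hτN := τpos N
      have hsN := spos N
      have h1 : |w N| * τ N = |w 0| * p N x := by
        rw [← abs_of_pos hτN, ← abs_mul, wprop N, abs_mul, abs_of_pos hsN]
      have h2 : τ N ≤ p N x * p N x := sτle N
      have h3 := hbd N
      have h4 : |w 0| * p N x ≤ ‖m‖ * (p N x * p N x) := by
        calc |w 0| * p N x = |w N| * τ N := h1.symm
        _ ≤ ‖m‖ * τ N := mul_le_mul_of_nonneg_right h3 hτN.le
        _ ≤ ‖m‖ * (p N x * p N x) := mul_le_mul_of_nonneg_left h2 (norm_nonneg m)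
      have h5 : |w 0| ≤ ‖m‖ * p N x := by
        have := mul_le_mul_of_nonneg_right h4 (le_of_lt (inv_pos.2 hsN))
        rw [mul_assoc] at this
        nlinarith [hsN]
      have h6 : p N x * (‖m‖ + 1) < |w 0| :=
        (lt_div_iff₀ (by positivity)).1 hN
      nlinarith [hsN, norm_nonneg m]
    have wzero : ∀ j, w j = 0 := by
      intro j
      have h1 := wprop j
      rw [w0zero, zero_mul] at h1
      rcases mul_eq_zero.1 h1 with h' | h'
      · exact h'
      · exact absurd h' (τpos j).ne'
    -- final contradiction with m αx = 1
    obtain ⟨N, hN⟩ := stend (1 / (‖m‖ + 1)) (by positivity)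
    set F : BoundedContinuousFunction ℕ ℝ := ∑ j ∈ Finset.range N, p j x • δ j with hF
    have hmF : m F = 0 := by
      rw [hF, map_sum]
      refine Finset.sum_eq_zero fun j _ => ?_
      rw [ContinuousLinearMap.map_smul, smul_eq_mul, show m (δ j) = w j from rfl, wzero,
        mul_zero]
    have hFval : ∀ k, F k = if k < N then p k x else 0 := by
      intro k
      rw [hF]
      rw [show ((∑ j ∈ Finset.range N, p j x • δ j : BoundedContinuousFunction ℕ ℝ) k)
        = ∑ j ∈ Finset.range N, (p j x • δ j) k from by
          simp [BoundedContinuousFunction.coe_sum]]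
      have : ∀ j ∈ Finset.range N, ((p j x • δ j) k : ℝ) = if k = j then p j x else 0 := by
        intro j _
        simp only [BoundedContinuousFunction.coe_smul, Pi.smul_apply, smul_eq_mul, δval]
        by_cases hkj : k = j <;> simp [hkj]
      rw [Finset.sum_congr rfl this, Finset.sum_ite_eq _ k (fun j => p j x)]
      by_cases hk : k < N
      · rw [if_pos (Finset.mem_range.2 hk), if_pos hk]
      · rw [if_neg (fun hmem => hk (Finset.mem_range.1 hmem)), if_neg hk]
    have hdiff : ‖αx - F‖ ≤ p N x := by
      refine (BoundedContinuousFunction.norm_le (hpos N)).2 ?_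
      intro k
      rw [BoundedContinuousFunction.coe_sub, Pi.sub_apply, hαx k, hFval k,
        Real.norm_eq_abs]
      by_cases hk : k < N
      · rw [if_pos hk]; simp [hpos N]
      · rw [if_neg hk]
        rw [sub_zero, abs_of_pos (spos k)]
        exact smono N k (by omega)
    have hfin : (1:ℝ) ≤ ‖m‖ * p N x := by
      have h1 : m (αx - F) = 1 := by rw [map_sub, hm.1, hmF, sub_zero]
      calc (1:ℝ) = ‖m (αx - F)‖ := by rw [h1]; simp
      _ ≤ ‖m‖ * ‖αx - F‖ := m.le_opNorm _
      _ ≤ ‖m‖ * p N x := mul_le_mul_of_nonneg_left hdiff (norm_nonneg m)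
    have h6 : p N x * (‖m‖ + 1) < 1 := (lt_div_iff₀ (by positivity)).1 hN
    nlinarith [spos N, norm_nonneg m]
  · -- p 1 x = 1 : all values are 1
    have key : ∀ n, p n x = 1 ∧ p (n+1) x = 1 := by
      intro n
      induction n with
      | zero => exact ⟨hs0, heq⟩
      | succ n ih =>
        refine ⟨ih.2, ?_⟩
        have h := Drel (n+1) (by omega)
        rw [heq] at h
        have e : n + 1 - 1 = n := by omega
        rw [e, ih.1, ih.2] at h
        have : a (n+1) * (p (n+1+1) x - 1) = 0 := by linarith
        rcases mul_eq_zero.1 this with h' | h'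
        · exact absurd h' (ha (n+1)).ne'
        · linarith
    exact fun n => (key n).1
  · -- p 1 x > 1 : contradiction with boundedness
    exfalso
    have hd0 : 0 < p 1 x - 1 := by linarith
    have key : ∀ n, 1 ≤ p n x ∧ 1 ≤ p (n+1) x ∧ p 1 x - 1 ≤ p (n+1) x - p n x := by
      intro n
      induction n with
      | zero =>
        refine ⟨le_of_eq hs0.symm, by linarith, ?_⟩
        simp [hs0]
      | succ n ih =>
        have h := Drel (n+1) (by omega)
        rw [show n+1-1 = n by omega] at h
        have hc1 : 0 ≤ c (n+1) * (p (n+1) x - p n x) :=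
          mul_nonneg (hc (n+1) (by omega)).le (by linarith [ih.2.2])
        have hprod : (p 1 x - 1) * 1 ≤ (p 1 x - 1) * p (n+1) x :=
          mul_le_mul_of_nonneg_left ih.2.1 hd0.le
        have h2 : p 1 x - 1 ≤ a (n+1) * (p (n+1+1) x - p (n+1) x) := by linarith
        have hΔ : 0 < p (n+1+1) x - p (n+1) x := by
          nlinarith [h2, hd0, ha (n+1)]
        have h3 : p 1 x - 1 ≤ p (n+1+1) x - p (n+1) x := by
          have := mul_le_mul_of_nonneg_right (a_le (n+1) (by omega)) hΔ.le
          rw [one_mul] at this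
          linarith
        exact ⟨ih.2.1, by linarith, h3⟩
    have grow : ∀ n : ℕ, 1 + (n:ℝ) * (p 1 x - 1) ≤ p (n+1) x := by
      intro n
      induction n with
      | zero => norm_num; linarith
      | succ n ih =>
        have h := (key (n+1)).2.2
        push_cast
        push_cast at ih
        linarith
    obtain ⟨n, hn⟩ := exists_nat_gt ((‖αx‖ - 1) / (p 1 x - 1))
    have h1 := (div_lt_iff₀ hd0).1 hn
    linarith [grow n, sbd (n+1)]
end
end

section
/- Let x, y ∈ 𝒟 with α_y ≠ α_x, and let m be any α_x-mean on ℓ∞(ℕ₀) (uniqueness is not assumed). Then m(α_y) = 0; i.e. an α_x-mean annihilates every bounded character different from α_x. -/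
open Filter Topology MeasureTheory

noncomputable section

theorem stmt4    (a b c : ℕ → ℝ)
    (ha : ∀ n : ℕ, 0 < a n) (hc : ∀ n : ℕ, 1 ≤ n → 0 < c n)
    (p : ℕ → ℝ → ℝ)
    (hp0 : ∀ y : ℝ, p 0 y = 1)
    (hp1 : ∀ y : ℝ, p 1 y = (y - b 0) / a 0)
    (hrec : ∀ n : ℕ, 1 ≤ n → ∀ y : ℝ,
      p 1 y * p n y = a n * p (n + 1) y + b n * p n y + c n * p (n - 1) y)
    (hnorm : ∀ n : ℕ, p n 1 = 1)
    (g : ℕ → ℕ → ℕ → ℝ)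
    (hg : ∀ n k : ℕ, ∀ y : ℝ,
      p n y * p k y = ∑ j ∈ Finset.range (n + k + 1), g n k j * p j y)
    (hgnn : ∀ n k j : ℕ, 0 ≤ g n k j)
    (x y : ℝ) (αx αy : BoundedContinuousFunction ℕ ℝ)
    (hαx : ∀ n : ℕ, αx n = p n x)
    (hαy : ∀ n : ℕ, αy n = p n y)
    (hne : αy ≠ αx)
    (m : BoundedContinuousFunction ℕ ℝ →L[ℝ] ℝ)
    (hm : IsAlphaMean g αx m) :
    m αy = 0 := by
  obtain ⟨h1, h2⟩ := hm
  obtain ⟨n, hn⟩ : ∃ n, αy n ≠ αx n := by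
    by_contra h
    push_neg at h
    exact hne (BoundedContinuousFunction.ext h)
  have key := h2 n αy ((p n y) • αy) ?_
  · rw [_root_.map_smul, smul_eq_mul] at key
    have hne' : p n y - αx n ≠ 0 := by
      rw [hαy] at hn; intro h; exact hn (by linarith)
    have : (p n y - αx n) * m αy = 0 := by ring_nf; linarith [key]
    exact (mul_eq_zero.mp this).resolve_left hne'
  · intro k
    simp only [BoundedContinuousFunction.coe_smul, Pi.smul_apply, smul_eq_mul, hαy]
    rw [← hg]
end
end

section
/- Suppose x ∈ 𝒟 ∩ supp μ, x is an isolated point of the character set 𝒟, and Σ_{n≥0} h(n)·|p_n(x)| < ∞. Then the functional f ↦ (Σ_{n≥0} h(n)·p_n(x)·f(n)) / (Σ_{n≥0} h(n)·p_n(x)²) is an α_x-mean on ℓ∞(ℕ₀), and it is the only α_x-mean; i.e. the polynomial hypergroup ℕ₀ is α_x-amenable with a unique α_x-mean. -/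
open Filter Topology MeasureTheory

noncomputable section




/-- Auxiliary: swap a `tsum` against finite sums with varying range. -/
lemma swap_aux (G : ℕ → ℕ → ℝ) (d : ℕ → ℕ) (w : ℕ → ℝ) (f : ℕ → ℝ) (C : ℝ)
    (hw : Summable fun i => |w i|) (hG : ∀ i j, 0 ≤ G i j)
    (hG1 : ∀ i, ∑ j ∈ Finset.range (d i), G i j = 1)
    (hf : ∀ j, |f j| ≤ C) :
    ∑' i, w i * (∑ j ∈ Finset.range (d i), G i j * f j)
      = ∑' j, (∑' i, (if j < d i then w i * G i j else 0)) * f j := by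
  classical
  set F : ℕ → ℕ → ℝ := fun i j => if j < d i then w i * G i j * f j else 0 with hF
  have hC : 0 ≤ C := le_trans (abs_nonneg _) (hf 0)
  have hrow : ∀ i, (∑' j, |F i j|) ≤ |w i| * C := by
    intro i
    have hz : ∀ j ∉ Finset.range (d i), |F i j| = 0 := by
      intro j hj
      simp only [hF, if_neg (not_lt.mpr (by simpa using hj)), abs_zero]
    rw [tsum_eq_sum hz]
    calc ∑ j ∈ Finset.range (d i), |F i j|
        ≤ ∑ j ∈ Finset.range (d i), |w i| * G i j * C := by
          apply Finset.sum_le_sum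
          intro j hj
          rw [hF]
          simp only [if_pos (Finset.mem_range.mp hj)]
          rw [abs_mul, abs_mul, abs_of_nonneg (hG i j)]
          exact mul_le_mul_of_nonneg_left (hf j)
            (mul_nonneg (abs_nonneg _) (hG i j))
      _ = |w i| * C := by
          rw [← Finset.sum_mul, ← Finset.mul_sum, hG1 i, mul_one]
  have habs : Summable (fun q : ℕ × ℕ => |F q.1 q.2|) := by
    refine (summable_prod_of_nonneg (f := fun q : ℕ × ℕ => |F q.1 q.2|)
      (fun q => abs_nonneg _)).mpr ⟨fun i => ?_, ?_⟩
    · exact summable_of_ne_finset_zero (s := Finset.range (d i))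
        (fun j hj => by simp only [hF, if_neg (not_lt.mpr (by simpa using hj)), abs_zero])
    · refine Summable.of_nonneg_of_le (fun i => tsum_nonneg fun j => abs_nonneg _)
        (fun i => hrow i) (hw.mul_right C)
  have hFsum : Summable (Function.uncurry F) := by
    have h2 : Summable fun q : ℕ × ℕ => |Function.uncurry F q| := habs
    exact summable_abs_iff.mp h2
  have hleft : ∀ i, w i * (∑ j ∈ Finset.range (d i), G i j * f j) = ∑' j, F i j := by
    intro i
    rw [tsum_eq_sum (s := Finset.range (d i))
      (fun j hj => by simp only [hF, if_neg (not_lt.mpr (by simpa using hj))]), Finset.mul_sum]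
    exact Finset.sum_congr rfl fun j hj => by
      simp only [hF, if_pos (Finset.mem_range.mp hj)]; ring
  calc ∑' i, w i * (∑ j ∈ Finset.range (d i), G i j * f j)
      = ∑' i, ∑' j, F i j := tsum_congr hleft
    _ = ∑' j, ∑' i, F i j := (Summable.tsum_comm hFsum).symm
    _ = ∑' j, (∑' i, (if j < d i then w i * G i j else 0)) * f j := by
        refine tsum_congr fun j => ?_
        rw [← tsum_mul_right]
        refine tsum_congr fun i => ?_
        by_cases hij : j < d i
        · simp only [hF, if_pos hij]
        · simp only [hF, if_neg hij, zero_mul]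



section Part1
variable (a b c : ℕ → ℝ)
    (ha : ∀ n : ℕ, 0 < a n) (hc : ∀ n : ℕ, 1 ≤ n → 0 < c n)
    (p : ℕ → ℝ → ℝ)
    (hp0 : ∀ y : ℝ, p 0 y = 1)
    (hp1 : ∀ y : ℝ, p 1 y = (y - b 0) / a 0)
    (hrec : ∀ n : ℕ, 1 ≤ n → ∀ y : ℝ,
      p 1 y * p n y = a n * p (n + 1) y + b n * p n y + c n * p (n - 1) y)

include ha hp0 hp1 hrec in
lemma cont_p : ∀ n, Continuous (p n) := by
  have h1 : Continuous (p 1) := by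
    have e : p 1 = fun y : ℝ => (y - b 0) / a 0 := funext hp1
    rw [e]; exact (continuous_id.sub continuous_const).div_const _
  have key : ∀ n, Continuous (p n) ∧ Continuous (p (n + 1)) := by
    intro n
    induction n with
    | zero =>
      refine ⟨?_, h1⟩
      have e : p 0 = fun _ : ℝ => 1 := funext hp0
      rw [e]; exact continuous_const
    | succ n ih =>
      refine ⟨ih.2, ?_⟩
      have hne : a (n + 1) ≠ 0 := (ha (n + 1)).ne'
      have e : p (n + 2) = fun y =>
          (p 1 y * p (n + 1) y - b (n + 1) * p (n + 1) y - c (n + 1) * p n y) / a (n + 1) := by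
        funext y
        have hr := hrec (n + 1) (by omega) y
        simp only [Nat.add_sub_cancel] at hr
        rw [eq_div_iff hne]
        linarith
      rw [e]
      exact (((h1.mul ih.2).sub (continuous_const.mul ih.2)).sub
        (continuous_const.mul ih.1)).div_const _
  exact fun n => (key n).1

end Part1

lemma integrable_of_cont (μ : Measure ℝ) [IsProbabilityMeasure μ]
    (K : Set ℝ) (hKcomp : IsCompact K) (hKzero : μ Kᶜ = 0)
    (f : ℝ → ℝ) (hf : Continuous f) : Integrable f μ := by
  obtain ⟨C, hC⟩ : ∃ C, ∀ y ∈ K, ‖f y‖ ≤ C :=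
    hKcomp.exists_bound_of_continuousOn hf.continuousOn
  refine Integrable.mono' (integrable_const C) hf.aestronglyMeasurable ?_
  have hae : ∀ᵐ y ∂μ, y ∈ K := by
    rw [ae_iff]
    exact hKzero
  filter_upwards [hae] with y hy using hC y hy



lemma In_pos (a b c : ℕ → ℝ)
    (ha : ∀ n : ℕ, 0 < a n) (hc : ∀ n : ℕ, 1 ≤ n → 0 < c n)
    (p : ℕ → ℝ → ℝ)
    (hp0 : ∀ y : ℝ, p 0 y = 1)
    (hrec : ∀ n : ℕ, 1 ≤ n → ∀ y : ℝ,
      p 1 y * p n y = a n * p (n + 1) y + b n * p n y + c n * p (n - 1) y)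
    (μ : Measure ℝ) [IsProbabilityMeasure μ]
    (hcont : ∀ n, Continuous (p n))
    (hint : ∀ f : ℝ → ℝ, Continuous f → Integrable f μ)
    (horth : ∀ n k : ℕ, n ≠ k → ∫ y, p n y * p k y ∂μ = 0) :
    ∀ n : ℕ, 0 < ∫ y, (p n y) ^ 2 ∂μ := by
  have haeofIn : ∀ n : ℕ, (∫ y, (p n y) ^ 2 ∂μ) = 0 → p n =ᵐ[μ] 0 := by
    intro n hn
    have h2 : (fun y => (p n y) ^ 2) =ᵐ[μ] 0 :=
      (integral_eq_zero_iff_of_nonneg (fun y => sq_nonneg (p n y))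
        (hint _ ((hcont n).pow 2))).mp hn
    filter_upwards [h2] with y hy
    simp only [Pi.zero_apply] at hy ⊢
    exact pow_eq_zero_iff two_ne_zero |>.mp hy
  have hup : ∀ N : ℕ, 1 ≤ N → p N =ᵐ[μ] 0 → p (N + 1) =ᵐ[μ] 0 := by
    intro N hN hae
    apply haeofIn
    have hkey : a N * ∫ y, (p (N + 1) y) ^ 2 ∂μ = 0 := by
      have e1 : a N * ∫ y, (p (N + 1) y) ^ 2 ∂μ
          = ∫ y, p (N + 1) y * (p 1 y * p N y) - b N * (p (N + 1) y * p N y)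
              - c N * (p (N + 1) y * p (N - 1) y) ∂μ := by
        rw [← integral_const_mul]
        refine integral_congr_ae (Filter.Eventually.of_forall fun y => ?_)
        simp only []
        rw [hrec N hN y]
        ring
      have i1 : Integrable (fun y => p (N + 1) y * (p 1 y * p N y)) μ :=
        hint _ ((hcont (N + 1)).mul ((hcont 1).mul (hcont N)))
      have i2 : Integrable (fun y => b N * (p (N + 1) y * p N y)) μ :=
        (hint _ ((hcont (N + 1)).mul (hcont N))).const_mul _
      have i3 : Integrable (fun y => c N * (p (N + 1) y * p (N - 1) y)) μ :=
        (hint _ ((hcont (N + 1)).mul (hcont (N - 1)))).const_mul _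
      have i12 : Integrable (fun y => p (N + 1) y * (p 1 y * p N y)
          - b N * (p (N + 1) y * p N y)) μ := i1.sub i2
      rw [e1, integral_sub i12 i3, integral_sub i1 i2]
      have z1 : ∫ y, p (N + 1) y * (p 1 y * p N y) ∂μ = 0 := by
        have : (fun y => p (N + 1) y * (p 1 y * p N y)) =ᵐ[μ] 0 := by
          filter_upwards [hae] with y hy
          simp only [Pi.zero_apply] at hy ⊢
          rw [hy]; ring
        rw [integral_congr_ae this]; simp
      have z2 : ∫ y, b N * (p (N + 1) y * p N y) ∂μ = 0 := by
        rw [integral_const_mul, horth (N + 1) N (by omega), mul_zero]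
      have z3 : ∫ y, c N * (p (N + 1) y * p (N - 1) y) ∂μ = 0 := by
        rw [integral_const_mul, horth (N + 1) (N - 1) (by omega), mul_zero]
      rw [z1, z2, z3]; ring
    rcases mul_eq_zero.mp hkey with h | h
    · exact absurd h (ha N).ne'
    · exact h
  have hdown : ∀ N : ℕ, 1 ≤ N → p N =ᵐ[μ] 0 → p (N - 1) =ᵐ[μ] 0 := by
    intro N hN hae
    have hup1 := hup N hN hae
    filter_upwards [hae, hup1] with y h0 h1
    have hr := hrec N hN y
    simp only [Pi.zero_apply] at h0 h1 ⊢
    rw [h0, h1] at hr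
    have hcN := hc N hN
    have : c N * p (N - 1) y = 0 := by linarith
    rcases mul_eq_zero.mp this with h' | h'
    · exact absurd h' hcN.ne'
    · exact h'
  have hnotae : ∀ N : ℕ, ¬(p N =ᵐ[μ] 0) := by
    have h0 : ¬(p 0 =ᵐ[μ] 0) := by
      intro hae
      have e0 : ∫ y, p 0 y ∂μ = 0 := by
        rw [integral_congr_ae hae]; simp
      have e1 : ∫ y, p 0 y ∂μ = 1 := by
        rw [integral_congr_ae (Filter.Eventually.of_forall hp0)]
        simp
      linarith
    intro N
    induction N with
    | zero => exact h0
    | succ n ih =>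
      intro hae
      exact ih (by simpa using hdown (n + 1) (by omega) hae)
  intro n
  refine lt_of_le_of_ne (integral_nonneg fun y => sq_nonneg _) fun e => ?_
  exact hnotae n (haeofIn n e.symm)



lemma master_id (p : ℕ → ℝ → ℝ)
    (g : ℕ → ℕ → ℕ → ℝ)
    (hg : ∀ n k : ℕ, ∀ y : ℝ,
      p n y * p k y = ∑ j ∈ Finset.range (n + k + 1), g n k j * p j y)
    (μ : Measure ℝ) [IsProbabilityMeasure μ]
    (hcont : ∀ n, Continuous (p n))
    (hint : ∀ f : ℝ → ℝ, Continuous f → Integrable f μ)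
    (horth : ∀ n k : ℕ, n ≠ k → ∫ y, p n y * p k y ∂μ = 0)
    (h : ℕ → ℝ)
    (hh : ∀ n : ℕ, h n = (∫ y, (p n y) ^ 2 ∂μ)⁻¹)
    (hInpos : ∀ n : ℕ, 0 < ∫ y, (p n y) ^ 2 ∂μ)
    (x : ℝ) :
    (∀ n j : ℕ, ∑' k, (if j < n + k + 1 then h k * p k x * g n k j else 0)
        = h j * (p n x * p j x)) ∧
    (∀ k j : ℕ, ∑' n, (if j < n + k + 1 then h n * p n x * g n k j else 0)
        = h j * (p k x * p j x)) := by
  classical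
  set In : ℕ → ℝ := fun n => ∫ y, (p n y) ^ 2 ∂μ with hIn
  have hhIn : ∀ n, h n * In n = 1 := fun n => by
    rw [hh n]; exact inv_mul_cancel₀ (hInpos n).ne'
  have horth' : ∀ n k : ℕ, ∫ y, p n y * p k y ∂μ = if n = k then In n else 0 := by
    intro n k
    by_cases hnk : n = k
    · subst hnk
      rw [if_pos rfl, hIn]
      refine integral_congr_ae (Filter.Eventually.of_forall fun y => ?_)
      ring
    · rw [if_neg hnk]; exact horth n k hnk
  set J : ℕ → ℕ → ℕ → ℝ := fun n k j => ∫ y, p n y * p k y * p j y ∂μ with hJdef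
  have hJ : ∀ n k j : ℕ, J n k j = if j < n + k + 1 then g n k j * In j else 0 := by
    intro n k j
    have e1 : ∀ y : ℝ, p n y * p k y * p j y
        = ∑ m ∈ Finset.range (n + k + 1), g n k m * (p m y * p j y) := by
      intro y
      rw [hg n k y, Finset.sum_mul]
      exact Finset.sum_congr rfl fun m _ => by ring
    calc J n k j = ∫ y, ∑ m ∈ Finset.range (n + k + 1), g n k m * (p m y * p j y) ∂μ :=
          integral_congr_ae (Filter.Eventually.of_forall e1)
      _ = ∑ m ∈ Finset.range (n + k + 1), ∫ y, g n k m * (p m y * p j y) ∂μ :=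
          integral_finset_sum _ fun m _ =>
            (hint _ ((hcont m).mul (hcont j))).const_mul _
      _ = ∑ m ∈ Finset.range (n + k + 1), (if m = j then g n k m * In j else 0) := by
          refine Finset.sum_congr rfl fun m _ => ?_
          rw [integral_const_mul, horth' m j]
          by_cases hmj : m = j
          · subst hmj; rw [if_pos rfl, if_pos rfl]
          · rw [if_neg hmj, if_neg hmj, mul_zero]
      _ = if j ∈ Finset.range (n + k + 1) then g n k j * In j else 0 :=
          Finset.sum_ite_eq' _ _ _
      _ = if j < n + k + 1 then g n k j * In j else 0 := by simp [Finset.mem_range]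
  have hgJ : ∀ n k j : ℕ, j < n + k + 1 → g n k j = h j * J n k j := by
    intro n k j hlt
    rw [hJ n k j, if_pos hlt]
    have : h j * (g n k j * In j) = g n k j * (h j * In j) := by ring
    rw [this, hhIn, mul_one]
  have hJswap : ∀ n k j : ℕ, J n k j = J n j k := by
    intro n k j
    refine integral_congr_ae (Filter.Eventually.of_forall fun y => ?_); ring
  have hJswap2 : ∀ n k j : ℕ, J n k j = J k n j := by
    intro n k j
    refine integral_congr_ae (Filter.Eventually.of_forall fun y => ?_); ring
  have hmaster : ∀ n j : ℕ, ∑' k, (if j < n + k + 1 then h k * p k x * g n k j else 0)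
      = h j * (p n x * p j x) := by
    intro n j
    have hterm : ∀ k, (if j < n + k + 1 then h k * p k x * g n k j else 0)
        = (if k < n + j + 1 then h j * (g n j k * p k x) else 0) := by
      intro k
      have e1 : (if j < n + k + 1 then h k * p k x * g n k j else 0)
          = h j * h k * p k x * J n k j := by
        by_cases hlt : j < n + k + 1
        · rw [if_pos hlt, hgJ n k j hlt]; ring
        · rw [if_neg hlt, hJ n k j, if_neg hlt, mul_zero]
      have e2 : (if k < n + j + 1 then h j * (g n j k * p k x) else 0)
          = h j * h k * p k x * J n j k := by
        by_cases hlt : k < n + j + 1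
        · rw [if_pos hlt, hgJ n j k hlt]; ring
        · rw [if_neg hlt, hJ n j k, if_neg hlt, mul_zero]
      rw [e1, e2, hJswap]
    rw [tsum_congr hterm, tsum_eq_sum (s := Finset.range (n + j + 1))
      (fun k hk => if_neg (by simpa using hk))]
    have e3 : ∑ k ∈ Finset.range (n + j + 1), (if k < n + j + 1 then h j * (g n j k * p k x) else 0)
        = ∑ k ∈ Finset.range (n + j + 1), h j * (g n j k * p k x) :=
      Finset.sum_congr rfl fun k hk => if_pos (Finset.mem_range.mp hk)
    rw [e3, ← Finset.mul_sum, ← hg n j x]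
  refine ⟨hmaster, fun k j => ?_⟩
  have hgsym : ∀ n : ℕ, j < n + k + 1 → g n k j = g k n j := by
    intro n hlt
    rw [hgJ n k j hlt, hgJ k n j (by omega), hJswap2]
  rw [← hmaster k j]
  refine tsum_congr fun n => ?_
  by_cases hlt : j < n + k + 1
  · rw [if_pos hlt, if_pos (by omega), hgsym n hlt]
  · rw [if_neg hlt, if_neg (by omega)]


theorem stmt5    (a b c : ℕ → ℝ)
    (ha : ∀ n : ℕ, 0 < a n) (hc : ∀ n : ℕ, 1 ≤ n → 0 < c n)
    (p : ℕ → ℝ → ℝ)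
    (hp0 : ∀ y : ℝ, p 0 y = 1)
    (hp1 : ∀ y : ℝ, p 1 y = (y - b 0) / a 0)
    (hrec : ∀ n : ℕ, 1 ≤ n → ∀ y : ℝ,
      p 1 y * p n y = a n * p (n + 1) y + b n * p n y + c n * p (n - 1) y)
    (hnorm : ∀ n : ℕ, p n 1 = 1)
    (g : ℕ → ℕ → ℕ → ℝ)
    (hg : ∀ n k : ℕ, ∀ y : ℝ,
      p n y * p k y = ∑ j ∈ Finset.range (n + k + 1), g n k j * p j y)
    (hgnn : ∀ n k j : ℕ, 0 ≤ g n k j)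
    (μ : Measure ℝ) [IsProbabilityMeasure μ]
    (hcsupp : ∃ K : Set ℝ, IsCompact K ∧ μ Kᶜ = 0)
    (horth : ∀ n k : ℕ, n ≠ k → ∫ y, p n y * p k y ∂μ = 0)
    (h : ℕ → ℝ)
    (hh : ∀ n : ℕ, h n = (∫ y, (p n y) ^ 2 ∂μ)⁻¹)
    (x : ℝ) (αx : BoundedContinuousFunction ℕ ℝ)
    (hαx : ∀ n : ℕ, αx n = p n x)
    (hxsupp : x ∈ measSupport μ)
    (hxiso : 𝓝[{y : ℝ | BddAbove (Set.range fun n : ℕ => |p n y|)} \ {x}] x = ⊥)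
    (hsum : Summable fun n : ℕ => h n * |p n x|) :
    ∃ m : BoundedContinuousFunction ℕ ℝ →L[ℝ] ℝ,
      IsAlphaMean g αx m ∧
      (∀ f : BoundedContinuousFunction ℕ ℝ,
        m f = (∑' n : ℕ, h n * p n x * f n) / (∑' n : ℕ, h n * (p n x) ^ 2)) ∧
      ∀ m' : BoundedContinuousFunction ℕ ℝ →L[ℝ] ℝ,
        IsAlphaMean g αx m' → m' = m := by
  classical
  obtain ⟨K, hKcomp, hKzero⟩ := hcsupp
  have hcont : ∀ n, Continuous (p n) := cont_p a b c ha p hp0 hp1 hrec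
  have hint : ∀ f : ℝ → ℝ, Continuous f → Integrable f μ :=
    integrable_of_cont μ K hKcomp hKzero
  have hInpos : ∀ n : ℕ, 0 < ∫ y, (p n y) ^ 2 ∂μ :=
    In_pos a b c ha hc p hp0 hrec μ hcont hint horth
  obtain ⟨hmaster, hmaster2⟩ := master_id p g hg μ hcont hint horth h hh hInpos x
  have hhpos : ∀ n, 0 < h n := fun n => by
    rw [hh n]; exact inv_pos.mpr (hInpos n)
  have hb : ∀ n, |p n x| ≤ ‖αx‖ := fun n => by
    rw [← hαx n, ← Real.norm_eq_abs]; exact αx.norm_coe_le_norm n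
  have hG1 : ∀ n k : ℕ, ∑ j ∈ Finset.range (n + k + 1), g n k j = 1 := by
    intro n k
    have e := hg n k 1
    simp only [hnorm, mul_one, one_mul] at e
    exact e.symm
  have hh0 : h 0 = 1 := by
    rw [hh 0]
    have e : ∫ y, (p 0 y) ^ 2 ∂μ = 1 := by
      simp only [hp0, one_pow]
      simp
    rw [e]; norm_num
  have hsum2 : Summable (fun n => h n * (p n x) ^ 2) := by
    refine Summable.of_nonneg_of_le (fun n => mul_nonneg (hhpos n).le (sq_nonneg _))
      (fun n => ?_) (hsum.mul_right ‖αx‖)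
    have e : h n * (p n x) ^ 2 = (h n * |p n x|) * |p n x| := by rw [← sq_abs]; ring
    rw [e]
    exact mul_le_mul_of_nonneg_left (hb n) (mul_nonneg (hhpos n).le (abs_nonneg _))
  set c0 : ℝ := ∑' n : ℕ, h n * (p n x) ^ 2 with hc0def
  have hc0one : 1 ≤ c0 := by
    have h0le := Summable.le_tsum hsum2 0 fun j _ => mul_nonneg (hhpos j).le (sq_nonneg _)
    rw [hp0, one_pow, hh0, mul_one] at h0le
    exact h0le
  have hc0pos : 0 < c0 := lt_of_lt_of_le one_pos hc0one
  have hc0ne : c0 ≠ 0 := hc0pos.ne'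
  have hfabs : ∀ (f : BoundedContinuousFunction ℕ ℝ) (j : ℕ), |f j| ≤ ‖f‖ := by
    intro f j
    have := f.norm_coe_le_norm j; rwa [Real.norm_eq_abs] at this
  have hsumf : ∀ f : BoundedContinuousFunction ℕ ℝ,
      Summable (fun n => h n * p n x * f n) := by
    intro f
    refine Summable.of_norm_bounded (g := fun n => h n * |p n x| * ‖f‖)
      (hsum.mul_right _) fun n => ?_
    rw [Real.norm_eq_abs, abs_mul, abs_mul, abs_of_pos (hhpos n)]
    exact mul_le_mul_of_nonneg_left (hfabs f n) (mul_nonneg (hhpos n).le (abs_nonneg _))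
  let mlin : BoundedContinuousFunction ℕ ℝ →ₗ[ℝ] ℝ :=
    { toFun := fun f => (∑' n : ℕ, h n * p n x * f n) / c0
      map_add' := by
        intro f₁ f₂
        show (∑' n : ℕ, h n * p n x * ((f₁ + f₂) n)) / c0
          = (∑' n : ℕ, h n * p n x * f₁ n) / c0 + (∑' n : ℕ, h n * p n x * f₂ n) / c0
        have e : ∀ n : ℕ, h n * p n x * ((f₁ + f₂) n)
            = h n * p n x * f₁ n + h n * p n x * f₂ n := by
          intro n
          simp only [BoundedContinuousFunction.coe_add, Pi.add_apply]
          ring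
        rw [tsum_congr e, Summable.tsum_add (hsumf f₁) (hsumf f₂), add_div]
      map_smul' := by
        intro r f
        simp only [RingHom.id_apply, smul_eq_mul]
        show (∑' n : ℕ, h n * p n x * ((r • f) n)) / c0
          = r * ((∑' n : ℕ, h n * p n x * f n) / c0)
        have e : ∀ n : ℕ, h n * p n x * ((r • f) n) = r * (h n * p n x * f n) := by
          intro n
          simp only [BoundedContinuousFunction.coe_smul, Pi.smul_apply, smul_eq_mul]
          ring
        rw [tsum_congr e, tsum_mul_left, mul_div_assoc] }
  have hbound : ∀ f : BoundedContinuousFunction ℕ ℝ,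
      ‖mlin f‖ ≤ ((∑' n : ℕ, h n * |p n x|) / c0) * ‖f‖ := by
    intro f
    have hnorms : Summable (fun n => ‖h n * p n x * f n‖) := by
      refine Summable.of_nonneg_of_le (fun n => norm_nonneg _) (fun n => ?_)
        (hsum.mul_right ‖f‖)
      rw [Real.norm_eq_abs, abs_mul, abs_mul, abs_of_pos (hhpos n)]
      exact mul_le_mul_of_nonneg_left (hfabs f n) (mul_nonneg (hhpos n).le (abs_nonneg _))
    have h1 : ‖∑' n : ℕ, h n * p n x * f n‖ ≤ (∑' n : ℕ, h n * |p n x|) * ‖f‖ := by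
      refine (norm_tsum_le_tsum_norm hnorms).trans ?_
      rw [← tsum_mul_right]
      refine Summable.tsum_le_tsum (fun n => ?_) hnorms (hsum.mul_right ‖f‖)
      rw [Real.norm_eq_abs, abs_mul, abs_mul, abs_of_pos (hhpos n)]
      exact mul_le_mul_of_nonneg_left (hfabs f n) (mul_nonneg (hhpos n).le (abs_nonneg _))
    show ‖(∑' n : ℕ, h n * p n x * f n) / c0‖ ≤ _
    rw [norm_div, Real.norm_eq_abs c0, abs_of_pos hc0pos, div_eq_mul_inv,
      div_eq_mul_inv, mul_assoc, mul_comm (c0⁻¹) ‖f‖, ← mul_assoc]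
    exact mul_le_mul_of_nonneg_right h1 (inv_nonneg.mpr hc0pos.le)
  let m : BoundedContinuousFunction ℕ ℝ →L[ℝ] ℝ :=
    mlin.mkContinuous ((∑' n : ℕ, h n * |p n x|) / c0) hbound
  have hmf : ∀ f : BoundedContinuousFunction ℕ ℝ,
      m f = (∑' n : ℕ, h n * p n x * f n) / c0 := fun f => rfl
  refine ⟨m, ⟨?_, ?_⟩, fun f => hmf f, ?_⟩
  · -- m αx = 1
    rw [hmf αx]
    have e : ∀ n : ℕ, h n * p n x * αx n = h n * (p n x) ^ 2 := fun n => by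
      rw [hαx n]; ring
    rw [tsum_congr e, ← hc0def]
    exact div_self hc0ne
  · -- translation property
    intro n f Tf hTf
    have hw : Summable fun k => |h k * p k x| := by
      refine hsum.congr fun k => ?_
      rw [abs_mul, abs_of_pos (hhpos k)]
    have hnum : (∑' k : ℕ, h k * p k x * Tf k) = p n x * ∑' j : ℕ, h j * p j x * f j := by
      calc (∑' k : ℕ, h k * p k x * Tf k)
          = ∑' k : ℕ, h k * p k x * ∑ j ∈ Finset.range (n + k + 1), g n k j * f j :=
            tsum_congr fun k => by rw [hTf k]
        _ = ∑' j : ℕ, (∑' k : ℕ, if j < n + k + 1 then h k * p k x * g n k j else 0) * f j :=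
            swap_aux (fun k j => g n k j) (fun k => n + k + 1) (fun k => h k * p k x)
              (fun j => f j) ‖f‖ hw (fun k j => hgnn n k j) (fun k => hG1 n k) (hfabs f)
        _ = ∑' j : ℕ, p n x * (h j * p j x * f j) :=
            tsum_congr fun j => by rw [hmaster n j]; ring
        _ = p n x * ∑' j : ℕ, h j * p j x * f j := tsum_mul_left
    rw [hmf Tf, hmf f, hαx n, hnum, mul_div_assoc]
  · -- uniqueness
    intro m' hm'
    obtain ⟨hm'1, hm'2⟩ := hm'
    refine ContinuousLinearMap.ext fun f => ?_
    have hTbnd : ∀ n k : ℕ, ‖∑ j ∈ Finset.range (n + k + 1), g n k j * f j‖ ≤ ‖f‖ := by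
      intro n k
      rw [Real.norm_eq_abs]
      calc |∑ j ∈ Finset.range (n + k + 1), g n k j * f j|
          ≤ ∑ j ∈ Finset.range (n + k + 1), |g n k j * f j| :=
            Finset.abs_sum_le_sum_abs _ _
        _ ≤ ∑ j ∈ Finset.range (n + k + 1), g n k j * ‖f‖ := by
            refine Finset.sum_le_sum fun j hj => ?_
            rw [abs_mul, abs_of_nonneg (hgnn n k j)]
            exact mul_le_mul_of_nonneg_left (hfabs f j) (hgnn n k j)
        _ = ‖f‖ := by rw [← Finset.sum_mul, hG1 n k, one_mul]
    let Tfn : ℕ → BoundedContinuousFunction ℕ ℝ := fun n =>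
      BoundedContinuousFunction.ofNormedAddCommGroup
        (fun k => ∑ j ∈ Finset.range (n + k + 1), g n k j * f j)
        continuous_of_discreteTopology ‖f‖ (hTbnd n)
    have hTfn_norm : ∀ n, ‖Tfn n‖ ≤ ‖f‖ := fun n =>
      BoundedContinuousFunction.norm_ofNormedAddCommGroup_le _ (norm_nonneg f) _
    have hm'T : ∀ n, m' (Tfn n) = p n x * m' f := by
      intro n
      have := hm'2 n f (Tfn n) (fun k => rfl)
      rwa [hαx n] at this
    set s : ℕ → ℝ := fun n => h n * p n x / c0 with hsdef
    have hssumabs : Summable fun n => |s n| := by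
      refine (hsum.div_const c0).congr fun n => ?_
      rw [hsdef]
      rw [abs_div, abs_mul, abs_of_pos (hhpos n), abs_of_pos hc0pos]
    have hLsum : Summable fun n => s n • Tfn n := by
      refine Summable.of_norm_bounded (g := fun n => |s n| * ‖f‖)
        (hssumabs.mul_right _) fun n => ?_
      show ‖s n • Tfn n‖ ≤ |s n| * ‖f‖
      refine (norm_smul_le (s n) (Tfn n)).trans ?_
      rw [Real.norm_eq_abs]
      exact mul_le_mul_of_nonneg_left (hTfn_norm n) (abs_nonneg _)
    set L : BoundedContinuousFunction ℕ ℝ := ∑' n : ℕ, s n • Tfn n with hLdef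
    have hm'L : m' L = m' f := by
      rw [hLdef, m'.map_tsum hLsum]
      have e : ∀ n : ℕ, m' (s n • Tfn n) = s n * p n x * m' f := by
        intro n
        rw [m'.map_smul, smul_eq_mul, hm'T n]; ring
      rw [tsum_congr e, tsum_mul_right]
      have e3 : (∑' n : ℕ, s n * p n x) = 1 := by
        have e4 : ∀ n : ℕ, s n * p n x = h n * (p n x) ^ 2 / c0 := fun n => by
          rw [hsdef]; ring
        rw [tsum_congr e4, tsum_div_const, ← hc0def, div_self hc0ne]
      rw [e3, one_mul]
    have hLval : L = m f • αx := by
      ext k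
      have e0 : L k = ∑' n : ℕ, (s n • Tfn n) k := by
        calc L k = (BoundedContinuousFunction.evalCLM ℝ k) L := rfl
          _ = ∑' n : ℕ, (BoundedContinuousFunction.evalCLM ℝ k) (s n • Tfn n) := by
              rw [hLdef]; exact ContinuousLinearMap.map_tsum _ hLsum
          _ = ∑' n : ℕ, (s n • Tfn n) k := rfl
      have e1 : ∀ n : ℕ, (s n • Tfn n) k
          = s n * ∑ j ∈ Finset.range (n + k + 1), g n k j * f j := by
        intro n
        simp only [BoundedContinuousFunction.coe_smul, Pi.smul_apply, smul_eq_mul]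
        rfl
      calc L k = ∑' n : ℕ, s n * ∑ j ∈ Finset.range (n + k + 1), g n k j * f j := by
            rw [e0]; exact tsum_congr e1
        _ = ∑' j : ℕ, (∑' n : ℕ, if j < n + k + 1 then s n * g n k j else 0) * f j :=
            swap_aux (fun n j => g n k j) (fun n => n + k + 1) s (fun j => f j) ‖f‖
              hssumabs (fun n j => hgnn n k j) (fun n => hG1 n k) (hfabs f)
        _ = ∑' j : ℕ, p k x * (h j * p j x * f j / c0) := by
            refine tsum_congr fun j => ?_
            have e2 : (∑' n : ℕ, if j < n + k + 1 then s n * g n k j else 0)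
                = (∑' n : ℕ, if j < n + k + 1 then h n * p n x * g n k j else 0) / c0 := by
              rw [← tsum_div_const]
              refine tsum_congr fun n => ?_
              by_cases hlt : j < n + k + 1
              · rw [if_pos hlt, if_pos hlt, hsdef]; ring
              · rw [if_neg hlt, if_neg hlt, zero_div]
            rw [e2, hmaster2 k j]; ring
        _ = p k x * ∑' j : ℕ, h j * p j x * f j / c0 := tsum_mul_left
        _ = (m f • αx) k := by
            rw [tsum_div_const, ← hmf f]
            simp only [BoundedContinuousFunction.coe_smul, Pi.smul_apply, smul_eq_mul,
              hαx k]
            ring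
    rw [hLval] at hm'L
    rw [m'.map_smul, smul_eq_mul, hm'1, mul_one] at hm'L
    exact hm'L.symm
end
end

section
/- Under the Nevai class BV ∩ M(0,1) assumption, every point of supp μ lying outside [−1,1] is strictly less than −1; in particular supp μ ∩ (1, ∞) = ∅ (the set A of mass points satisfies A ⊂ (−∞, −1)). -/
open Filter Topology MeasureTheory

noncomputable section

set_option maxHeartbeats 1000000 in
theorem stmt7    (a b c : ℕ → ℝ)
    (ha : ∀ n : ℕ, 0 < a n) (hc : ∀ n : ℕ, 1 ≤ n → 0 < c n)
    (p : ℕ → ℝ → ℝ)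
    (hp0 : ∀ y : ℝ, p 0 y = 1)
    (hp1 : ∀ y : ℝ, p 1 y = (y - b 0) / a 0)
    (hrec : ∀ n : ℕ, 1 ≤ n → ∀ y : ℝ,
      p 1 y * p n y = a n * p (n + 1) y + b n * p n y + c n * p (n - 1) y)
    (hnorm : ∀ n : ℕ, p n 1 = 1)
    (g : ℕ → ℕ → ℕ → ℝ)
    (hg : ∀ n k : ℕ, ∀ y : ℝ,
      p n y * p k y = ∑ j ∈ Finset.range (n + k + 1), g n k j * p j y)
    (hgnn : ∀ n k j : ℕ, 0 ≤ g n k j)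
    (μ : Measure ℝ) [IsProbabilityMeasure μ]
    (hcsupp : ∃ K : Set ℝ, IsCompact K ∧ μ Kᶜ = 0)
    (horth : ∀ n k : ℕ, n ≠ k → ∫ y, p n y * p k y ∂μ = 0)
    (h : ℕ → ℝ)
    (hh : ∀ n : ℕ, h n = (∫ y, (p n y) ^ 2 ∂μ)⁻¹)
    (lam beta : ℕ → ℝ)
    (hlam0 : lam 0 = 0) (hlam1 : lam 1 = a 0 * Real.sqrt (c 1))
    (hlam : ∀ n : ℕ, 2 ≤ n → lam n = a 0 * Real.sqrt (c n * a (n - 1)))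
    (hbeta0 : beta 0 = b 0) (hbeta : ∀ n : ℕ, 1 ≤ n → beta n = a 0 * b n + b 0)
    (hNevai1 : Tendsto lam atTop (𝓝 (1 / 2)))
    (hNevai2 : Tendsto beta atTop (𝓝 0))
    (hBV : Summable fun n : ℕ =>
      |lam (n + 2) - lam (n + 1)| + |beta (n + 2) - beta (n + 1)|)
 :
    ∀ x ∈ measSupport μ, x ∉ Set.Icc (-1 : ℝ) 1 → x < -1 := by

  intro x hx hxI
  by_contra hlt
  push_neg at hlt
  have hx1 : 1 < x := by
    by_contra hle
    push_neg at hle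
    exact hxI ⟨hlt, hle⟩
  obtain ⟨K, hK, hKc⟩ := hcsupp
  obtain ⟨ε, hε0, hxε⟩ : ∃ ε : ℝ, 0 < ε ∧ 1 + ε < x :=
    ⟨(x - 1) / 2, by linarith, by linarith⟩
  have hU : 0 < μ (Set.Ioi (1 + ε)) :=
    hx (Set.Ioi (1 + ε)) isOpen_Ioi (Set.mem_Ioi.mpr hxε)
  have hUfin : μ (Set.Ioi (1 + ε)) ≠ ⊤ := measure_ne_top μ _
  obtain ⟨m, hm, hm0⟩ : ∃ m : ℝ, m = (μ (Set.Ioi (1 + ε))).toReal ∧ 0 < m :=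
    ⟨_, rfl, ENNReal.toReal_pos hU.ne' hUfin⟩
  -- a 0 = 1 - b 0 and the formula for p 1
  have ha0b : a 0 = 1 - b 0 := by
    have h1 := hnorm 1
    rw [hp1 1, div_eq_one_iff_eq (ha 0).ne'] at h1
    linarith
  have hp1' : ∀ y : ℝ, p 1 y = 1 + (y - 1) / a 0 := by
    intro y
    have h0 : a 0 ≠ 0 := (ha 0).ne'
    rw [hp1 y]
    field_simp
    linarith [ha0b]
  -- a n + b n + c n = 1 for n ≥ 1
  have hsum1 : ∀ n : ℕ, 1 ≤ n → a n + b n + c n = 1 := by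
    intro n hn
    have := hrec n hn 1
    rw [hnorm, hnorm, hnorm, hnorm] at this
    linarith
  -- bound on the sequence a
  obtain ⟨L, hL⟩ : BddBelow (Set.range beta) := hNevai2.bddBelow_range
  have hLbd : ∀ n, L ≤ beta n := fun n => hL (Set.mem_range_self n)
  obtain ⟨A, hA1, haA⟩ : ∃ A : ℝ, 1 ≤ A ∧ ∀ n, a n ≤ A := by
    refine ⟨max (a 0) (max 1 (1 + (b 0 - L) / a 0)),
      le_trans (le_max_left 1 _) (le_max_right _ _), ?_⟩
    intro n
    rcases Nat.eq_zero_or_pos n with h0 | h1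
    · rw [h0]; exact le_max_left _ _
    · have hbL : (L - b 0) / a 0 ≤ b n := by
        rw [div_le_iff₀ (ha 0)]
        have hbb := hbeta n h1
        nlinarith [hLbd n, mul_comm (b n) (a 0)]
      have h2 : a n ≤ 1 - b n := by
        have := hsum1 n h1
        have := hc n h1
        linarith
      calc a n ≤ 1 - (L - b 0) / a 0 := by linarith
        _ = 1 + (b 0 - L) / a 0 := by ring
        _ ≤ _ := le_trans (le_max_right 1 _) (le_max_right _ _)
  have hA0 : (0 : ℝ) < A := lt_of_lt_of_le one_pos hA1
  -- the growth ratio r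
  obtain ⟨r, hr1, hra0, hran⟩ :
      ∃ r : ℝ, 1 < r ∧ r ≤ 1 + ε / a 0 ∧ ∀ n, r ≤ 1 + ε / (a 0 * a n) := by
    refine ⟨1 + ε / (a 0 * A), ?_, ?_, ?_⟩
    · have : 0 < ε / (a 0 * A) := div_pos hε0 (mul_pos (ha 0) hA0)
      linarith
    · have : ε / (a 0 * A) ≤ ε / a 0 :=
        div_le_div_of_nonneg_left hε0.le (ha 0) (by nlinarith [ha 0])
      linarith
    · intro n
      have : ε / (a 0 * A) ≤ ε / (a 0 * a n) :=
        div_le_div_of_nonneg_left hε0.le (mul_pos (ha 0) (ha n))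
          (mul_le_mul_of_nonneg_left (haA n) (ha 0).le)
      linarith
  have hr0 : 0 < r := lt_trans one_pos hr1
  -- p 1 y ≥ r for y ≥ 1 + ε
  have hp1r : ∀ y : ℝ, 1 + ε ≤ y → 1 + ε / a 0 ≤ p 1 y := by
    intro y hy
    rw [hp1' y]
    have h2 : ε / a 0 ≤ (y - 1) / a 0 :=
      (div_le_div_iff_of_pos_right (ha 0)).mpr (by linarith)
    linarith
  -- main growth estimate
  have hgrow : ∀ y : ℝ, 1 + ε ≤ y → ∀ n : ℕ, r ^ n ≤ p n y ∧ r * p n y ≤ p (n + 1) y := by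
    intro y hy n
    induction n with
    | zero =>
      constructor
      · rw [hp0]; norm_num
      · rw [hp0, mul_one]
        exact le_trans hra0 (hp1r y hy)
    | succ n ih =>
      obtain ⟨ih1, ih2⟩ := ih
      have hpn0 : 0 < p n y := lt_of_lt_of_le (pow_pos hr0 n) ih1
      have hpn1 : r ^ (n + 1) ≤ p (n + 1) y := by
        calc r ^ (n + 1) = r * r ^ n := by ring
          _ ≤ r * p n y := by nlinarith
          _ ≤ p (n + 1) y := ih2
      refine ⟨hpn1, ?_⟩
      have hpn1p : 0 < p (n + 1) y := lt_of_lt_of_le (pow_pos hr0 (n + 1)) hpn1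
      have hmono : p n y ≤ p (n + 1) y := by nlinarith
      have hrec' := hrec (n + 1) (Nat.le_add_left 1 n) y
      simp only [Nat.add_sub_cancel] at hrec'
      have hsum' := hsum1 (n + 1) (Nat.le_add_left 1 n)
      have hcpos := hc (n + 1) (Nat.le_add_left 1 n)
      have hp1y : 1 + ε / a 0 ≤ p 1 y := hp1r y hy
      have han1 := ha (n + 1)
      -- a (n+1) * p (n+2) ≥ (a (n+1) + ε / a 0) * p (n+1)
      have hstep : (a (n + 1) + ε / a 0) * p (n + 1) y ≤ a (n + 1) * p (n + 2) y := by
        have e1 : a (n + 1) * p (n + 2) y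
            = (p 1 y - b (n + 1)) * p (n + 1) y - c (n + 1) * p n y := by
          linarith [hrec']
        have e2 : c (n + 1) * p n y ≤ c (n + 1) * p (n + 1) y := by
          nlinarith
        nlinarith
      have key : r * p (n + 1) y ≤ (1 + ε / (a 0 * a (n + 1))) * p (n + 1) y := by
        nlinarith [hran (n + 1)]
      have e0 : 1 + ε / (a 0 * a (n + 1)) = (a (n + 1) + ε / a 0) / a (n + 1) := by
        rw [add_div, div_self han1.ne', div_div]
      have e4 : (1 + ε / (a 0 * a (n + 1))) * p (n + 1) y
          = ((a (n + 1) + ε / a 0) * p (n + 1) y) / a (n + 1) := by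
        rw [e0, div_mul_eq_mul_div]
      calc r * p (n + 1) y ≤ (1 + ε / (a 0 * a (n + 1))) * p (n + 1) y := key
        _ = ((a (n + 1) + ε / a 0) * p (n + 1) y) / a (n + 1) := e4
        _ ≤ (a (n + 1) * p (n + 2) y) / a (n + 1) :=
            (div_le_div_iff_of_pos_right han1).mpr hstep
        _ = p (n + 2) y := mul_div_cancel_left₀ _ han1.ne'
  -- continuity of each p n
  have hc1 : Continuous (p 1) := by
    have : p 1 = fun y : ℝ => (y - b 0) / a 0 := funext hp1
    rw [this]
    exact (continuous_id.sub continuous_const).div_const _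
  have hcont2 : ∀ n : ℕ, Continuous (p n) ∧ Continuous (p (n + 1)) := by
    intro n
    induction n with
    | zero =>
      constructor
      · have : p 0 = fun _ : ℝ => (1 : ℝ) := funext hp0
        rw [this]; exact continuous_const
      · exact hc1
    | succ n ih =>
      refine ⟨ih.2, ?_⟩
      have hfun : p (n + 2) = fun y =>
          (p 1 y * p (n + 1) y - b (n + 1) * p (n + 1) y - c (n + 1) * p n y) / a (n + 1) := by
        funext y
        have hr' := hrec (n + 1) (Nat.le_add_left 1 n) y
        simp only [Nat.add_sub_cancel] at hr'
        rw [eq_div_iff (ha (n + 1)).ne']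
        linarith [mul_comm (p (n + 2) y) (a (n + 1))]
      rw [hfun]
      exact (((hc1.mul ih.2).sub (continuous_const.mul ih.2)).sub
        (continuous_const.mul ih.1)).div_const _
  have hcont : ∀ n : ℕ, Continuous (p n) := fun n => (hcont2 n).1
  -- integrability of continuous functions
  have haeK : ∀ᵐ y ∂μ, y ∈ K := by
    rw [MeasureTheory.ae_iff]
    exact hKc
  have hint : ∀ f : ℝ → ℝ, Continuous f → Integrable f μ := by
    intro f hf
    obtain ⟨C, hC⟩ := hK.exists_bound_of_continuousOn hf.continuousOn
    refine Integrable.mono' (integrable_const C) hf.aestronglyMeasurable ?_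
    filter_upwards [haeK] with y hy
    exact hC y hy
  -- moments
  have hmom0 : ∫ y, p 0 y ∂μ = 1 := by simp [hp0]
  have hmom : ∀ j : ℕ, j ≠ 0 → ∫ y, p j y ∂μ = 0 := by
    intro j hj
    have := horth 0 j (fun hcon => hj hcon.symm)
    simpa [hp0] using this
  -- the key L² bound : ∫ p_n² ≤ 1
  have hL2 : ∀ n : ℕ, ∫ y, (p n y) ^ 2 ∂μ ≤ 1 := by
    intro n
    have hgsum : ∑ j ∈ Finset.range (n + n + 1), g n n j = 1 := by
      have := hg n n 1
      rw [hnorm n] at this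
      simp only [hnorm, mul_one] at this
      linarith
    have hcalc : ∫ y, (p n y) ^ 2 ∂μ = g n n 0 := by
      have e1 : ∫ y, (p n y) ^ 2 ∂μ
          = ∫ y, ∑ j ∈ Finset.range (n + n + 1), g n n j * p j y ∂μ := by
        congr 1
        funext y
        rw [pow_two]
        exact hg n n y
      rw [e1, integral_finset_sum _ (fun j _ => (hint (p j) (hcont j)).const_mul (g n n j))]
      have e2 : ∀ j ∈ Finset.range (n + n + 1),
          ∫ y, g n n j * p j y ∂μ = g n n j * ∫ y, p j y ∂μ :=
        fun j _ => integral_const_mul _ _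
      rw [Finset.sum_congr rfl e2, Finset.sum_eq_single 0]
      · rw [hmom0, mul_one]
      · intro j _ hj
        rw [hmom j hj, mul_zero]
      · intro hcon
        exact absurd (Finset.mem_range.mpr (Nat.succ_pos _)) hcon
    rw [hcalc, ← hgsum]
    exact Finset.single_le_sum (fun j _ => hgnn n n j)
      (Finset.mem_range.mpr (Nat.succ_pos _))
  -- lower bound on ∫ p_n² from the mass beyond 1 + ε
  have hlow : ∀ n : ℕ, r ^ n * m ≤ ∫ y, (p n y) ^ 2 ∂μ := by
    intro n
    have hintn : Integrable (fun y => (p n y) ^ 2) μ := hint _ ((hcont n).pow 2)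
    have h1 : r ^ n * m ≤ ∫ y in Set.Ioi (1 + ε), (p n y) ^ 2 ∂μ := by
      rw [hm]
      apply setIntegral_ge_of_const_le_real measurableSet_Ioi hUfin
      · intro y hy
        have hy' : 1 + ε ≤ y := le_of_lt hy
        have hgy := (hgrow y hy' n).1
        have hrn1 : (1 : ℝ) ≤ r ^ n := one_le_pow₀ hr1.le
        nlinarith
      · exact hintn.integrableOn
    have h2 : ∫ y in Set.Ioi (1 + ε), (p n y) ^ 2 ∂μ ≤ ∫ y, (p n y) ^ 2 ∂μ := by
      apply setIntegral_le_integral hintn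
      filter_upwards with y using sq_nonneg _
    linarith
  -- contradiction
  obtain ⟨n, hn⟩ := pow_unbounded_of_one_lt (1 / m) hr1
  have hcon : 1 / m * m < r ^ n * m := mul_lt_mul_of_pos_right hn hm0
  rw [one_div_mul_cancel hm0.ne'] at hcon
  linarith [hL2 n, hlow n]
end
end

section
/- If for every x ∈ 𝒟 with α_x ≠ 1 (i.e. for every nontrivial bounded hermitian character of the polynomial hypergroup) there exists exactly one α_x-mean on ℓ∞(ℕ₀), then 1 ∈ supp μ (the trivial character lies in the support of the Plancherel measure). -/
open Filter Topology MeasureTheory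

noncomputable section

set_option linter.unusedSectionVars false
set_option linter.unusedVariables false

namespace Stmt14Aux

open Polynomial

def P1 (a b : ℕ → ℝ) : Polynomial ℝ := C (a 0)⁻¹ * (X - C (b 0))

def Pn (a b c : ℕ → ℝ) : ℕ → Polynomial ℝ
  | 0 => 1
  | 1 => P1 a b
  | n + 2 => C (a (n+1))⁻¹ *
      ((P1 a b - C (b (n+1))) * Pn a b c (n+1) - C (c (n+1)) * Pn a b c n)

variable {a b c : ℕ → ℝ}

lemma Pn_deg (ha : ∀ n, 0 < a n) :
    ∀ n, (Pn a b c n).natDegree = n ∧ (Pn a b c n).coeff n ≠ 0 := by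
  have ha0 : (a 0)⁻¹ ≠ 0 := inv_ne_zero (ha 0).ne'
  have hP1deg : (P1 a b).natDegree = 1 := by
    rw [P1, natDegree_C_mul ha0, natDegree_X_sub_C]
  have hP1c : (P1 a b).coeff 1 = (a 0)⁻¹ := by
    simp [P1, coeff_C_mul, coeff_sub, coeff_X_one, coeff_C]
  intro n
  induction n using Nat.strong_induction_on with
  | _ n ih =>
    match n with
    | 0 => constructor <;> simp [Pn]
    | 1 =>
      refine ⟨?_, ?_⟩
      · show (P1 a b).natDegree = 1; exact hP1deg
      · show (P1 a b).coeff 1 ≠ 0; rw [hP1c]; exact ha0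
    | (n+2) =>
      obtain ⟨hd1, hc1⟩ := ih (n+1) (by omega)
      obtain ⟨hd0, hc0⟩ := ih n (by omega)
      have hne1 : Pn a b c (n+1) ≠ 0 := fun h => hc1 (by simp [h])
      set u : Polynomial ℝ := P1 a b - C (b (n+1)) with hu
      have hudeg : u.natDegree = 1 := by rw [hu, natDegree_sub_C, hP1deg]
      have huc : u.coeff 1 = (a 0)⁻¹ := by
        rw [hu, coeff_sub, hP1c, coeff_C]; simp
      have hune : u ≠ 0 := fun h => ha0 (by rw [← huc, h, coeff_zero])
      set v : Polynomial ℝ := u * Pn a b c (n+1) with hv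
      have hvdeg : v.natDegree = n + 2 := by
        rw [hv, natDegree_mul hune hne1, hudeg, hd1]; omega
      have hvc : v.coeff (n+2) ≠ 0 := by
        have := coeff_mul_degree_add_degree u (Pn a b c (n+1))
        rw [hudeg, hd1] at this
        have h12 : 1 + (n+1) = n + 2 := by omega
        rw [h12] at this
        rw [hv, this]
        exact mul_ne_zero (by rw [leadingCoeff, hudeg, huc]; exact ha0)
          (by rw [leadingCoeff, hd1]; exact hc1)
      set w : Polynomial ℝ := v - C (c (n+1)) * Pn a b c n with hw
      have hwlt : (C (c (n+1)) * Pn a b c n).natDegree < n + 2 := by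
        calc (C (c (n+1)) * Pn a b c n).natDegree ≤ (Pn a b c n).natDegree :=
              natDegree_C_mul_le _ _
        _ < n + 2 := by rw [hd0]; omega
      have hwdeg : w.natDegree = n + 2 := by
        rw [hw, natDegree_sub_eq_left_of_natDegree_lt (by rw [hvdeg]; exact hwlt), hvdeg]
      have hwc : w.coeff (n+2) ≠ 0 := by
        rw [hw, coeff_sub, coeff_eq_zero_of_natDegree_lt hwlt, sub_zero]
        exact hvc
      have han : (a (n+1))⁻¹ ≠ 0 := inv_ne_zero (ha (n+1)).ne'
      constructor
      · show (C (a (n+1))⁻¹ * w).natDegree = n + 2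
        rw [natDegree_C_mul han, hwdeg]
      · show (C (a (n+1))⁻¹ * w).coeff (n+2) ≠ 0
        rw [coeff_C_mul]; exact mul_ne_zero han hwc

lemma Pn_eval (ha : ∀ n, 0 < a n) {p : ℕ → ℝ → ℝ}
    (hp0 : ∀ y : ℝ, p 0 y = 1)
    (hp1 : ∀ y : ℝ, p 1 y = (y - b 0) / a 0)
    (hrec : ∀ n : ℕ, 1 ≤ n → ∀ y : ℝ,
      p 1 y * p n y = a n * p (n + 1) y + b n * p n y + c n * p (n - 1) y) :
    ∀ n (y : ℝ), (Pn a b c n).eval y = p n y := by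
  have e1 : ∀ y : ℝ, (P1 a b).eval y = p 1 y := by
    intro y; simp [P1]; rw [hp1, div_eq_inv_mul]
  intro n
  induction n using Nat.strong_induction_on with
  | _ n ih =>
    match n with
    | 0 => intro y; simp [Pn, hp0]
    | 1 => intro y; simpa [Pn] using e1 y
    | (n+2) =>
      intro y
      have hr := hrec (n+1) (by omega) y
      simp only [Nat.add_sub_cancel] at hr
      have hane : a (n+1) ≠ 0 := (ha (n+1)).ne'
      simp only [Pn, eval_mul, eval_sub, eval_C, ih (n+1) (by omega), ih n (by omega), e1]
      field_simp
      linear_combination hr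

lemma expand {P : ℕ → Polynomial ℝ} (hdeg : ∀ k, (P k).natDegree = k)
    (hlc : ∀ k, (P k).coeff k ≠ 0) :
    ∀ (d : ℕ) (F : Polynomial ℝ), F.natDegree ≤ d →
      ∃ cf : ℕ → ℝ, F = ∑ k ∈ Finset.range (d+1), C (cf k) * P k := by
  intro d
  induction d with
  | zero =>
    intro F hF
    set e0 := (P 0).coeff 0 with he0
    have hP0 : P 0 = C e0 := eq_C_of_natDegree_le_zero (le_of_eq (hdeg 0))
    refine ⟨fun _ => F.coeff 0 / e0, ?_⟩
    rw [Finset.sum_range_one]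
    show F = C (F.coeff 0 / e0) * P 0
    rw [hP0, ← C_mul, div_mul_cancel₀ _ (hlc 0)]
    exact eq_C_of_natDegree_le_zero hF
  | succ d ihd =>
    intro F hF
    set q : ℝ := F.coeff (d+1) / (P (d+1)).coeff (d+1) with hq
    set G : Polynomial ℝ := F - C q * P (d+1) with hG
    have hGdeg : G.natDegree ≤ d := by
      rw [natDegree_le_iff_coeff_eq_zero]
      intro N hN
      rw [hG, coeff_sub, coeff_C_mul]
      rcases eq_or_lt_of_le (Nat.succ_le_of_lt hN) with hNd | hNd
      · rw [← hNd, hq, div_mul_cancel₀ _ (hlc (d+1)), sub_self]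
      · rw [coeff_eq_zero_of_natDegree_lt (lt_of_le_of_lt hF hNd),
          coeff_eq_zero_of_natDegree_lt (by rw [hdeg (d+1)]; exact hNd), mul_zero, sub_self]
    obtain ⟨cf, hcf⟩ := ihd G hGdeg
    refine ⟨fun k => if k = d+1 then q else cf k, ?_⟩
    rw [Finset.sum_range_succ]
    simp only []
    rw [if_pos (by trivial)]
    have : ∑ k ∈ Finset.range (d+1), C (if k = d+1 then q else cf k) * P k
        = ∑ k ∈ Finset.range (d+1), C (cf k) * P k := by
      apply Finset.sum_congr rfl
      intro k hk
      rw [if_neg (by simp at hk; omega)]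
    rw [this, ← hcf, hG]
    ring

variable {μ : Measure ℝ} [IsProbabilityMeasure μ]

lemma integrable_eval {K : Set ℝ} (hK : IsCompact K) (hKc : μ Kᶜ = 0)
    (F : Polynomial ℝ) : Integrable (fun y => F.eval y) μ := by
  obtain ⟨C0, hC0⟩ : ∃ C0, ∀ y ∈ K, ‖F.eval y‖ ≤ C0 :=
    hK.exists_bound_of_continuousOn (F.continuous.continuousOn)
  refine Integrable.mono' (integrable_const C0) (F.continuous.aestronglyMeasurable) ?_
  have : ∀ᵐ y ∂μ, y ∈ K := by
    rw [ae_iff]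
    exact hKc
  filter_upwards [this] with y hy
  exact hC0 y hy

lemma integrable_mul (hint : ∀ F : Polynomial ℝ, Integrable (fun y => eval y F) μ)
    (F G : Polynomial ℝ) : Integrable (fun y => eval y F * eval y G) μ := by
  simpa using hint (F * G)

lemma eval_expand {P : ℕ → Polynomial ℝ} {D : ℕ} {cf : ℕ → ℝ} {F : Polynomial ℝ}
    (hcf : F = ∑ k ∈ Finset.range D, C (cf k) * P k) (y : ℝ) :
    eval y F = ∑ k ∈ Finset.range D, cf k * eval y (P k) := by
  conv_lhs => rw [hcf]
  rw [eval_finset_sum]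
  exact Finset.sum_congr rfl (fun k _ => by rw [eval_mul, eval_C])

lemma integral_orth_expand {P : ℕ → Polynomial ℝ}
    (hint : ∀ F : Polynomial ℝ, Integrable (fun y => eval y F) μ)
    (hoi : ∀ j k, j ≠ k → ∫ y, eval y (P j) * eval y (P k) ∂μ = 0)
    {D : ℕ} {cf : ℕ → ℝ} {F : Polynomial ℝ}
    (hcf : F = ∑ k ∈ Finset.range D, C (cf k) * P k) (G : Polynomial ℝ) :
    ∫ y, eval y F * eval y G ∂μ
      = ∑ k ∈ Finset.range D, cf k * ∫ y, eval y (P k) * eval y G ∂μ := by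
  have hev : (fun y => eval y F * eval y G)
      = fun y => ∑ k ∈ Finset.range D, cf k * (eval y (P k) * eval y G) := by
    funext y
    rw [eval_expand hcf, Finset.sum_mul]
    exact Finset.sum_congr rfl (fun k _ => by ring)
  rw [hev, integral_finset_sum]
  · exact Finset.sum_congr rfl (fun k _ => integral_const_mul _ _)
  · exact fun k _ => (integrable_mul hint (P k) G).const_mul _

lemma integral_sq_expand {P : ℕ → Polynomial ℝ}
    (hint : ∀ F : Polynomial ℝ, Integrable (fun y => eval y F) μ)
    (hoi : ∀ j k, j ≠ k → ∫ y, eval y (P j) * eval y (P k) ∂μ = 0)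
    {D : ℕ} {cf : ℕ → ℝ} {F : Polynomial ℝ}
    (hcf : F = ∑ k ∈ Finset.range D, C (cf k) * P k) :
    ∫ y, eval y F * eval y F ∂μ
      = ∑ k ∈ Finset.range D, cf k ^ 2 * ∫ y, eval y (P k) * eval y (P k) ∂μ := by
  rw [integral_orth_expand hint hoi hcf F]
  refine Finset.sum_congr rfl (fun k hk => ?_)
  have : ∫ y, eval y (P k) * eval y F ∂μ
      = ∑ l ∈ Finset.range D, cf l * ∫ y, eval y (P k) * eval y (P l) ∂μ := by
    have hev : (fun y => eval y (P k) * eval y F)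
        = fun y => ∑ l ∈ Finset.range D, cf l * (eval y (P k) * eval y (P l)) := by
      funext y
      rw [eval_expand hcf, Finset.mul_sum]
      exact Finset.sum_congr rfl (fun l _ => by ring)
    rw [hev, integral_finset_sum]
    · exact Finset.sum_congr rfl (fun l _ => integral_const_mul _ _)
    · exact fun l _ => (integrable_mul hint (P k) (P l)).const_mul _
  rw [this, Finset.sum_eq_single k]
  · ring
  · intro l hl hlk
    rw [hoi k l (Ne.symm hlk), mul_zero]
  · intro hk'; exact absurd hk hk'
  
lemma vanish {P : ℕ → Polynomial ℝ} (hdeg : ∀ k, (P k).natDegree = k)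
    (hlc : ∀ k, (P k).coeff k ≠ 0)
    (hint : ∀ F : Polynomial ℝ, Integrable (fun y => eval y F) μ)
    (hoi : ∀ j k, j ≠ k → ∫ y, eval y (P j) * eval y (P k) ∂μ = 0)
    (hpos : ∀ j, 0 < ∫ y, eval y (P j) * eval y (P j) ∂μ)
    (F : Polynomial ℝ) (hF : (fun y => eval y F) =ᵐ[μ] 0) : F = 0 := by
  obtain ⟨cf, hcf⟩ := expand hdeg hlc F.natDegree F le_rfl
  suffices hc : ∀ k ∈ Finset.range (F.natDegree + 1), cf k = 0 by
    rw [hcf]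
    exact Finset.sum_eq_zero (fun k hk => by rw [hc k hk]; simp)
  intro j hj
  have h1 : ∫ y, eval y F * eval y (P j) ∂μ = 0 := by
    have hz : (fun y => eval y F * eval y (P j)) =ᵐ[μ] 0 := by
      filter_upwards [hF] with y hy
      simp only [Pi.zero_apply] at hy ⊢
      rw [hy, zero_mul]
    rw [integral_congr_ae hz]; simp
  have h2 : ∫ y, eval y F * eval y (P j) ∂μ
      = cf j * ∫ y, eval y (P j) * eval y (P j) ∂μ := by
    rw [integral_orth_expand hint hoi hcf (P j), Finset.sum_eq_single j]
    · intro l hl hlj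
      rw [hoi l j hlj, mul_zero]
    · intro hj'; exact absurd hj hj'
  rw [h1] at h2
  exact (mul_eq_zero.mp h2.symm).resolve_right (hpos j).ne'

lemma prod_ratio {x A B₀ ρ : ℝ} (hρ0 : 0 ≤ ρ) (hρ1 : ρ ≤ 1)
    (hρA : ρ * (1 - A) = x - A) (hxB : B₀ < x) (hx1 : x < 1) :
    ∀ M : Multiset ℝ, (∀ r ∈ M, r ∈ Set.Icc A B₀) →
      0 ≤ (M.map fun r => x - r).prod ∧
      (M.map fun r => x - r).prod ≤ ρ ^ Multiset.card M * (M.map fun r => 1 - r).prod := by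
  intro M
  induction M using Multiset.induction_on with
  | empty => intro _; simp
  | cons r M ih =>
    intro hmem
    obtain ⟨hrA, hrB⟩ := hmem r (Multiset.mem_cons_self r M)
    obtain ⟨ih0, ih1⟩ := ih (fun s hs => hmem s (Multiset.mem_cons_of_mem hs))
    have hxr : (0:ℝ) ≤ x - r := by linarith
    have h1r : (0:ℝ) < 1 - r := by linarith
    have hfac : x - r ≤ ρ * (1 - r) := by nlinarith
    have hprod1 : (0:ℝ) ≤ (M.map fun r => 1 - r).prod := by
      apply Multiset.prod_nonneg
      intro z hz
      obtain ⟨s, hs, rfl⟩ := Multiset.mem_map.mp hz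
      have := (hmem s (Multiset.mem_cons_of_mem hs)).2
      linarith
    constructor
    · simp only [Multiset.map_cons, Multiset.prod_cons]
      exact mul_nonneg hxr ih0
    · simp only [Multiset.map_cons, Multiset.prod_cons, Multiset.card_cons]
      calc (x - r) * (M.map fun r => x - r).prod
          ≤ (ρ * (1 - r)) * (ρ ^ Multiset.card M * (M.map fun r => 1 - r).prod) := by
            apply mul_le_mul hfac ih1 ih0 (by positivity)
        _ = ρ ^ (Multiset.card M + 1) * ((1 - r) * (M.map fun r => 1 - r).prod) := by ring

lemma rootbound {P : ℕ → Polynomial ℝ} (hdeg : ∀ k, (P k).natDegree = k)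
    (hlc : ∀ k, (P k).coeff k ≠ 0)
    (hint : ∀ F : Polynomial ℝ, Integrable (fun y => eval y F) μ)
    (hoi : ∀ j k, j ≠ k → ∫ y, eval y (P j) * eval y (P k) ∂μ = 0)
    (hpos : ∀ j, 0 < ∫ y, eval y (P j) * eval y (P j) ∂μ)
    {A B₀ : ℝ} (hAB : A ≤ B₀) (hB1 : B₀ < 1)
    (hae : ∀ᵐ y ∂μ, y ∈ Set.Icc A B₀)
    (n : ℕ) (h1 : (P n).eval 1 = 1)
    {x : ℝ} (hxB : B₀ < x) (hx1 : x < 1) :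
    |(P n).eval x| ≤ ((x - A)/(1 - A)) ^ n := by
  classical
  set Q := P n with hQdef
  have hQ0 : Q ≠ 0 := fun hz => hlc n (by rw [hQdef] at hz; rw [hz]; simp)
  set M := Q.roots with hM
  -- the set of odd-multiplicity roots inside [A, B₀]
  set s : Finset ℝ := M.toFinset.filter
      (fun r => r ∈ Set.Icc A B₀ ∧ Odd (M.count r)) with hs
  -- Step 1: n ≤ s.card
  have hcard : n ≤ s.card := by
    by_contra hlt
    push_neg at hlt
    -- the test polynomial
    set q : Polynomial ℝ := ∏ r ∈ s, (X - C r) with hq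
    have hqmonic : q.Monic := monic_prod_of_monic _ _ (fun r _ => monic_X_sub_C r)
    have hqdeg : q.natDegree = s.card := by
      rw [hq, natDegree_prod_of_monic _ _ (fun r _ => monic_X_sub_C r)]
      simp [natDegree_X_sub_C]
    -- decomposition of Q
    obtain ⟨R, hQR⟩ := prod_multiset_X_sub_C_dvd Q
    have hprodM0 : (M.map fun r => X - C r).prod ≠ 0 :=
      (monic_multiset_prod_of_monic _ _ (fun r _ => monic_X_sub_C r)).ne_zero
    have hR0 : R ≠ 0 := by
      intro hz; rw [hz, mul_zero] at hQR; exact hQ0 hQR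
    have hRroots : R.roots = 0 := by
      have h2 : Q.roots = M + R.roots := by
        conv_lhs => rw [hQR]
        rw [roots_mul (by rw [← hQR]; exact hQ0), roots_multiset_prod_X_sub_C]
      rw [← hM] at h2
      have := left_eq_add.mp h2
      exact this
    have hRne : ∀ y : ℝ, R.eval y ≠ 0 := by
      intro y hy
      have : y ∈ R.roots := by
        rw [mem_roots hR0]
        exact hy
      rw [hRroots] at this
      exact absurd this (Multiset.notMem_zero y)
    -- the "constant sign" part w
    set ab : Finset ℝ := M.toFinset.filter (fun r => B₀ < r) with hab
    set w : Polynomial ℝ := R * ∏ r ∈ ab, (X - C r) ^ M.count r with hw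
    have hwne : ∀ y ∈ Set.Icc A B₀, w.eval y ≠ 0 := by
      intro y hy
      rw [hw]
      simp only [eval_mul, eval_prod, eval_pow, eval_sub, eval_X, eval_C]
      apply mul_ne_zero (hRne y)
      rw [Finset.prod_ne_zero_iff]
      intro r hr
      have hrB : B₀ < r := (Finset.mem_filter.mp hr).2
      have : y - r ≠ 0 := by
        intro hz
        have hyr : y = r := sub_eq_zero.mp hz
        have : y ≤ B₀ := hy.2
        linarith
      exact pow_ne_zero _ this
    have hwA : w.eval A ≠ 0 := hwne A (Set.mem_Icc.mpr ⟨le_refl A, hAB⟩)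
    have hsign : ∀ y ∈ Set.Icc A B₀, 0 ≤ w.eval A * w.eval y := by
      intro y hy
      rcases lt_trichotomy (w.eval A * w.eval y) 0 with hneg | hzero | hpos'
      · exfalso
        have hAy : A ≤ y := hy.1
        have hcont : ContinuousOn (fun z => w.eval z) (Set.Icc A y) :=
          (Polynomial.continuous w).continuousOn
        have hyB : y ≤ B₀ := hy.2
        rcases mul_neg_iff.mp hneg with ⟨hA1, hy1⟩ | ⟨hA1, hy1⟩
        · -- w A > 0 > w y
          have : (0:ℝ) ∈ Set.Icc (w.eval y) (w.eval A) := ⟨hy1.le, hA1.le⟩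
          obtain ⟨z, hz, hz0⟩ := intermediate_value_Icc' hAy hcont this
          exact hwne z (Set.mem_Icc.mpr ⟨hz.1, hz.2.trans hyB⟩) hz0
        · have : (0:ℝ) ∈ Set.Icc (w.eval A) (w.eval y) := ⟨hA1.le, hy1.le⟩
          obtain ⟨z, hz, hz0⟩ := intermediate_value_Icc hAy hcont this
          exact hwne z (Set.mem_Icc.mpr ⟨hz.1, hz.2.trans hyB⟩) hz0
      · exact le_of_eq hzero.symm
      · exact hpos'.le
    -- the remaining non-negative part
    set rest : Finset ℝ := M.toFinset.filter (fun r => ¬ B₀ < r) with hrest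
    have hssub : s ⊆ rest := by
      intro r hr
      have h' := Finset.mem_filter.mp hr
      exact Finset.mem_filter.mpr ⟨h'.1, not_lt.mpr h'.2.1.2⟩
    have hQq : ∀ y : ℝ, (Q * q).eval y
        = w.eval y * ∏ r ∈ rest, (y - r) ^ (M.count r + if r ∈ s then 1 else 0) := by
      intro y
      have e1 : Q.eval y = ((∏ r ∈ ab, (y - r) ^ M.count r)
          * (∏ r ∈ rest, (y - r) ^ M.count r)) * R.eval y := by
        conv_lhs => rw [hQR]
        rw [eval_mul]
        congr 1
        rw [eval_multiset_prod, Multiset.map_map]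
        have hcomp : ((fun p => eval y p) ∘ fun a => X - C a) = fun r => y - r := by
          funext r; simp
        rw [hcomp, ← hM, Finset.prod_multiset_map_count,
          ← Finset.prod_filter_mul_prod_filter_not M.toFinset (fun r => B₀ < r)]
      have e2 : q.eval y = ∏ r ∈ rest, (if r ∈ s then (y - r) else 1) := by
        rw [hq, eval_prod]
        simp only [eval_sub, eval_X, eval_C]
        rw [Finset.prod_ite_mem, Finset.inter_eq_right.mpr hssub]
      have e3 : (∏ r ∈ rest, (y - r) ^ M.count r) * (∏ r ∈ rest, (if r ∈ s then (y - r) else 1))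
          = ∏ r ∈ rest, (y - r) ^ (M.count r + if r ∈ s then 1 else 0) := by
        rw [← Finset.prod_mul_distrib]
        apply Finset.prod_congr rfl
        intro r _
        split_ifs with hcase
        · rw [pow_add, pow_one]
        · rw [add_zero, mul_one]
      have hweval : w.eval y = R.eval y * ∏ r ∈ ab, (y - r) ^ M.count r := by
        rw [hw, eval_mul, eval_prod]
        simp only [eval_pow, eval_sub, eval_X, eval_C]
      rw [eval_mul, e1, e2, hweval, ← e3]
      ring
    have hNN : ∀ y ∈ Set.Icc A B₀,
        0 ≤ ∏ r ∈ rest, (y - r) ^ (M.count r + if r ∈ s then 1 else 0) := by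
      intro y hy
      apply Finset.prod_nonneg
      intro r hr
      have hrB : ¬ B₀ < r := (Finset.mem_filter.mp hr).2
      have hrtf : r ∈ M.toFinset := (Finset.mem_filter.mp hr).1
      by_cases hrs : r ∈ s
      · have hodd : Odd (M.count r) := (Finset.mem_filter.mp hrs).2.2
        rw [if_pos hrs]
        exact (hodd.add_one).pow_nonneg _
      · rw [if_neg hrs, add_zero]
        by_cases hrA : A ≤ r
        · have heven : ¬ Odd (M.count r) := fun hodd =>
            hrs (Finset.mem_filter.mpr ⟨hrtf, Set.mem_Icc.mpr ⟨hrA, not_lt.mp hrB⟩, hodd⟩)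
          exact (Nat.not_odd_iff_even.mp heven).pow_nonneg _
        · push_neg at hrA
          have : 0 ≤ y - r := by linarith [hy.1]
          exact pow_nonneg this _
    have hsgn2 : ∀ᵐ y ∂μ, 0 ≤ eval y (C (w.eval A) * (Q * q)) := by
      filter_upwards [hae] with y hy
      rw [eval_mul, eval_C, hQq y, ← mul_assoc]
      exact mul_nonneg (hsign y hy) (hNN y hy)
    have hIQq : ∫ y, eval y (Q * q) ∂μ = 0 := by
      obtain ⟨cf, hcf⟩ := expand hdeg hlc (n-1) q (by rw [hqdeg]; omega)
      have hqQ : ∫ y, eval y q * eval y Q ∂μ = 0 := by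
        rw [integral_orth_expand hint hoi hcf Q]
        apply Finset.sum_eq_zero
        intro k hk
        rw [hQdef, hoi k n (by simp at hk; omega), mul_zero]
      have hcomm : (fun y => eval y (Q * q)) = fun y => eval y q * eval y Q := by
        funext y; rw [eval_mul]; ring
      rw [hcomm, hqQ]
    have hIzero : ∫ y, eval y (C (w.eval A) * (Q * q)) ∂μ = 0 := by
      have : (fun y => eval y (C (w.eval A) * (Q * q)))
          = fun y => (w.eval A) * eval y (Q * q) := by
        funext y; rw [eval_mul, eval_C]
      rw [this, integral_const_mul, hIQq, mul_zero]
    have hzae : (fun y => eval y (C (w.eval A) * (Q * q))) =ᵐ[μ] 0 :=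
      (integral_eq_zero_iff_of_nonneg_ae hsgn2 (hint _)).mp hIzero
    have hQq0 : C (w.eval A) * (Q * q) = 0 := vanish hdeg hlc hint hoi hpos _ hzae
    exact (mul_ne_zero (fun hCz => hwA (by simpa using (C_eq_zero.mp hCz)))
      (mul_ne_zero hQ0 hqmonic.ne_zero)) hQq0
  -- Step 2: conclude the bound
  have hQdeg : Q.natDegree = n := by rw [hQdef]; exact hdeg n
  have hMn : Multiset.card M ≤ n := by
    rw [hM, ← hQdeg]; exact card_roots' Q
  have hsub : s ⊆ M.toFinset := Finset.filter_subset _ _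
  have h1card : s.card ≤ M.toFinset.card := Finset.card_le_card hsub
  have h2card : M.toFinset.card ≤ Multiset.card M := Multiset.toFinset_card_le M
  have hseq : s = M.toFinset := Finset.eq_of_subset_of_card_le hsub (by omega)
  have hMcard : Multiset.card M = n := by omega
  have hfact : C Q.leadingCoeff * (M.map fun r => X - C r).prod = Q := by
    rw [hM]
    exact C_leadingCoeff_mul_prod_multiset_X_sub_C (by rw [← hM, hMcard, hQdeg])
  have hevalprod : ∀ z : ℝ, Q.eval z = Q.leadingCoeff * (M.map fun r => z - r).prod := by
    intro z
    conv_lhs => rw [← hfact]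
    rw [eval_mul, eval_C, eval_multiset_prod, Multiset.map_map]
    have hcomp : ((fun p => eval z p) ∘ fun r => X - C r) = fun r => z - r := by
      funext r; simp
    rw [hcomp]
  have hmemIcc : ∀ r ∈ M, A ≤ r ∧ r ≤ B₀ := by
    intro r hr
    have : r ∈ s := by rw [hseq]; exact Multiset.mem_toFinset.mpr hr
    have := (Finset.mem_filter.mp this).2.1
    exact ⟨this.1, this.2⟩
  have hprod1pos : 0 < (M.map fun r => 1 - r).prod := by
    apply Multiset.prod_pos
    intro z hz
    obtain ⟨r, hr, rfl⟩ := Multiset.mem_map.mp hz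
    have := (hmemIcc r hr).2
    linarith
  have heval1 : Q.leadingCoeff * (M.map fun r => (1:ℝ) - r).prod = 1 := by
    rw [← hevalprod 1, h1]
  have hlcpos : 0 < Q.leadingCoeff := by
    rcases lt_trichotomy Q.leadingCoeff 0 with hneg | hzero | hposl
    · nlinarith
    · rw [hzero, zero_mul] at heval1; norm_num at heval1
    · exact hposl
  have hA1 : A < 1 := lt_of_le_of_lt hAB hB1
  set ρ : ℝ := (x - A) / (1 - A) with hρ
  have hρ0 : 0 ≤ ρ := div_nonneg (by linarith) (by linarith)
  have hρ1 : ρ ≤ 1 := by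
    rw [hρ, div_le_one (by linarith)]; linarith
  have hρA : ρ * (1 - A) = x - A := div_mul_cancel₀ _ (by linarith)
  obtain ⟨hpr0, hpr1⟩ := prod_ratio hρ0 hρ1 hρA hxB hx1 M
    (fun r hr => Set.mem_Icc.mpr (hmemIcc r hr))
  have hQx : Q.eval x = Q.leadingCoeff * (M.map fun r => x - r).prod := hevalprod x
  have hnn : 0 ≤ Q.eval x := by rw [hQx]; exact mul_nonneg hlcpos.le hpr0
  have : Q.eval x ≤ ρ ^ n := by
    rw [hQx]
    calc Q.leadingCoeff * (M.map fun r => x - r).prod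
        ≤ Q.leadingCoeff * (ρ ^ Multiset.card M * (M.map fun r => 1 - r).prod) :=
          mul_le_mul_of_nonneg_left hpr1 hlcpos.le
      _ = ρ ^ Multiset.card M * (Q.leadingCoeff * (M.map fun r => 1 - r).prod) := by ring
      _ = ρ ^ n := by rw [heval1, hMcard, mul_one]
    
  rw [abs_of_nonneg hnn]
  exact this

lemma christoffel {P : ℕ → Polynomial ℝ} (hdeg : ∀ k, (P k).natDegree = k)
    (hlc : ∀ k, (P k).coeff k ≠ 0)
    (hint : ∀ F : Polynomial ℝ, Integrable (fun y => eval y F) μ)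
    (hoi : ∀ j k, j ≠ k → ∫ y, eval y (P j) * eval y (P k) ∂μ = 0)
    (hpos : ∀ j, 0 < ∫ y, eval y (P j) * eval y (P j) ∂μ)
    {A B₀ x : ℝ} (hAB : A ≤ B₀) (hxB : B₀ < x)
    (hae : ∀ᵐ y ∂μ, y ∈ Set.Icc A B₀) (N : ℕ) :
    ((x - A + 1)/(B₀ - A + 1)) ^ (2*N)
      ≤ ∑ k ∈ Finset.range (N+1),
          (∫ y, eval y (P k) * eval y (P k) ∂μ)⁻¹ * (eval x (P k))^2 := by
  set t : ℝ := A - 1 with ht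
  have hxt : 0 < x - t := by rw [ht]; linarith
  have hBt : 0 < B₀ - t := by rw [ht]; linarith
  set γ : ℕ → ℝ := fun k => ∫ y, eval y (P k) * eval y (P k) ∂μ with hγ
  set S : ℝ := ∑ k ∈ Finset.range (N+1), (γ k)⁻¹ * (eval x (P k))^2 with hS
  set qN : Polynomial ℝ := (C (x - t)⁻¹ * (X - C t)) ^ N with hqN
  have hqdeg : qN.natDegree ≤ N := by
    rw [hqN, natDegree_pow]
    calc N * (C (x - t)⁻¹ * (X - C t)).natDegree
        ≤ N * (X - C t).natDegree := by
          exact Nat.mul_le_mul_left N (natDegree_C_mul_le _ _)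
      _ = N := by rw [natDegree_X_sub_C, mul_one]
  obtain ⟨cf, hcf⟩ := expand hdeg hlc N qN hqdeg
  have hevalx : ∑ k ∈ Finset.range (N+1), cf k * eval x (P k) = 1 := by
    rw [← eval_expand hcf x, hqN]
    rw [eval_pow, eval_mul, eval_C, eval_sub, eval_X, eval_C,
      inv_mul_cancel₀ hxt.ne', one_pow]
  have hIq : ∫ y, eval y qN * eval y qN ∂μ
      = ∑ k ∈ Finset.range (N+1), cf k ^ 2 * γ k := integral_sq_expand hint hoi hcf
  have hbound : ∫ y, eval y qN * eval y qN ∂μ ≤ ((B₀ - t)/(x - t))^(2*N) := by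
    have hconst : ∫ _ : ℝ, ((B₀ - t)/(x - t))^(2*N) ∂μ = ((B₀ - t)/(x - t))^(2*N) := by
      rw [integral_const]; simp
    rw [← hconst]
    apply integral_mono_ae (hint (qN * qN) |>.congr ?_) (integrable_const _) ?_
    · exact Eventually.of_forall (fun y => by simp [eval_mul])
    · filter_upwards [hae] with y hy
      have hev : eval y qN = ((x - t)⁻¹ * (y - t))^N := by
        rw [hqN, eval_pow, eval_mul, eval_C, eval_sub, eval_X, eval_C]
      set u : ℝ := (x - t)⁻¹ * (y - t) with hu
      have hu0 : 0 ≤ u := by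
        apply mul_nonneg (inv_nonneg.mpr hxt.le)
        rw [ht]; linarith [hy.1]
      have hur : u ≤ (B₀ - t)/(x - t) := by
        rw [hu, div_eq_inv_mul]
        exact mul_le_mul_of_nonneg_left (by linarith [hy.2]) (inv_nonneg.mpr hxt.le)
      rw [hev, ← pow_add]
      have h2N : N + N = 2*N := by ring
      rw [h2N]
      exact pow_le_pow_left₀ hu0 hur _
  have hCS : (1:ℝ) ≤ (∑ k ∈ Finset.range (N+1), cf k ^ 2 * γ k) * S := by
    have hcs := Finset.sum_mul_sq_le_sq_mul_sq (Finset.range (N+1))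
      (fun k => cf k * Real.sqrt (γ k)) (fun k => Real.sqrt ((γ k)⁻¹) * eval x (P k))
    have e1 : ∑ k ∈ Finset.range (N+1),
        (cf k * Real.sqrt (γ k)) * (Real.sqrt ((γ k)⁻¹) * eval x (P k)) = 1 := by
      rw [← hevalx]
      apply Finset.sum_congr rfl
      intro k _
      have : Real.sqrt (γ k) * Real.sqrt ((γ k)⁻¹) = 1 := by
        rw [Real.sqrt_inv, mul_inv_cancel₀ (Real.sqrt_ne_zero'.mpr (hpos k))]
      calc (cf k * Real.sqrt (γ k)) * (Real.sqrt ((γ k)⁻¹) * eval x (P k))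
          = (cf k * eval x (P k)) * (Real.sqrt (γ k) * Real.sqrt ((γ k)⁻¹)) := by ring
        _ = cf k * eval x (P k) := by rw [this, mul_one]
    have e2 : ∑ k ∈ Finset.range (N+1), (cf k * Real.sqrt (γ k))^2
        = ∑ k ∈ Finset.range (N+1), cf k ^ 2 * γ k := by
      apply Finset.sum_congr rfl
      intro k _
      rw [mul_pow, Real.sq_sqrt (hpos k).le]
    have e3 : ∑ k ∈ Finset.range (N+1), (Real.sqrt ((γ k)⁻¹) * eval x (P k))^2 = S := by
      rw [hS]
      apply Finset.sum_congr rfl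
      intro k _
      rw [mul_pow, Real.sq_sqrt (inv_nonneg.mpr (hpos k).le)]
    rw [e1, e2, e3] at hcs
    simpa using hcs
  have hSnn : 0 ≤ S := by
    rw [hS]
    apply Finset.sum_nonneg
    intro k _
    exact mul_nonneg (inv_nonneg.mpr (hpos k).le) (sq_nonneg _)
  have hfinal : (1:ℝ) ≤ ((B₀ - t)/(x - t))^(2*N) * S := by
    calc (1:ℝ) ≤ (∑ k ∈ Finset.range (N+1), cf k ^ 2 * γ k) * S := hCS
      _ ≤ ((B₀ - t)/(x - t))^(2*N) * S := by
          apply mul_le_mul_of_nonneg_right _ hSnn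
          rw [← hIq]; exact hbound
  have hgoal : ((x - t)/(B₀ - t))^(2*N) ≤ S := by
    rw [div_pow, div_le_iff₀ (pow_pos hBt _)]
    rw [div_pow, div_mul_eq_mul_div, one_le_div (pow_pos hxt _)] at hfinal
    linarith [hfinal]
  have hxA : x - t = x - A + 1 := by rw [ht]; ring
  have hBA : B₀ - t = B₀ - A + 1 := by rw [ht]; ring
  rw [← hxA, ← hBA]
  exact hgoal

end Stmt14Aux

open Stmt14Aux Polynomial

theorem stmt14    (a b c : ℕ → ℝ)
    (ha : ∀ n : ℕ, 0 < a n) (hc : ∀ n : ℕ, 1 ≤ n → 0 < c n)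
    (p : ℕ → ℝ → ℝ)
    (hp0 : ∀ y : ℝ, p 0 y = 1)
    (hp1 : ∀ y : ℝ, p 1 y = (y - b 0) / a 0)
    (hrec : ∀ n : ℕ, 1 ≤ n → ∀ y : ℝ,
      p 1 y * p n y = a n * p (n + 1) y + b n * p n y + c n * p (n - 1) y)
    (hnorm : ∀ n : ℕ, p n 1 = 1)
    (g : ℕ → ℕ → ℕ → ℝ)
    (hg : ∀ n k : ℕ, ∀ y : ℝ,
      p n y * p k y = ∑ j ∈ Finset.range (n + k + 1), g n k j * p j y)
    (hgnn : ∀ n k j : ℕ, 0 ≤ g n k j)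
    (μ : Measure ℝ) [IsProbabilityMeasure μ]
    (hcsupp : ∃ K : Set ℝ, IsCompact K ∧ μ Kᶜ = 0)
    (horth : ∀ n k : ℕ, n ≠ k → ∫ y, p n y * p k y ∂μ = 0)
    (h : ℕ → ℝ)
    (hh : ∀ n : ℕ, h n = (∫ y, (p n y) ^ 2 ∂μ)⁻¹)
    (hamen : ∀ (x : ℝ) (αx : BoundedContinuousFunction ℕ ℝ),
      (∀ n : ℕ, αx n = p n x) → αx ≠ 1 →
      ∃! m : BoundedContinuousFunction ℕ ℝ →L[ℝ] ℝ, IsAlphaMean g αx m) :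
    (1 : ℝ) ∈ measSupport μ := by
  classical
  by_contra hns
  simp only [measSupport, Set.mem_setOf_eq] at hns
  push_neg at hns
  obtain ⟨U, hUopen, hU1, hUle⟩ := hns
  have hU0 : μ U = 0 := le_antisymm hUle (zero_le)
  obtain ⟨K, hK, hKc⟩ := hcsupp
  set P : ℕ → Polynomial ℝ := Pn a b c with hP
  have hdeg : ∀ k, (P k).natDegree = k := fun k => (Pn_deg ha k).1
  have hlc : ∀ k, (P k).coeff k ≠ 0 := fun k => (Pn_deg ha k).2
  have heval : ∀ n (y : ℝ), Polynomial.eval y (P n) = p n y := Pn_eval ha hp0 hp1 hrec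
  have hint : ∀ F : Polynomial ℝ, Integrable (fun y => Polynomial.eval y F) μ :=
    integrable_eval hK hKc
  have hintp : ∀ n, Integrable (fun y => p n y) μ := by
    intro n
    have := hint (P n)
    simpa [heval] using this
  have hint2 : ∀ n k, Integrable (fun y => p n y * p k y) μ := by
    intro n k
    have := integrable_mul hint (P n) (P k)
    simpa [heval] using this
  have hoi : ∀ j k, j ≠ k →
      ∫ y, Polynomial.eval y (P j) * Polynomial.eval y (P k) ∂μ = 0 := by
    intro j k hjk
    simp only [heval]
    exact horth j k hjk
  set γ : ℕ → ℝ := fun k => ∫ y, p k y * p k y ∂μ with hγ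
  -- ∫ p j = δ_{j0}
  have hip : ∀ j, j ≠ 0 → ∫ y, p j y ∂μ = 0 := by
    intro j hj
    have := horth j 0 hj
    simpa [hp0] using this
  have hip0 : ∫ y, p 0 y ∂μ = (1:ℝ) := by simp [hp0]
  -- sums of g are 1
  have hgsum : ∀ n k, ∑ j ∈ Finset.range (n+k+1), g n k j = 1 := by
    intro n k
    have := hg n k 1
    simpa [hnorm] using this.symm
  -- g n k 0 is the pairing
  have hg0 : ∀ n k, g n k 0 = ∫ y, p n y * p k y ∂μ := by
    intro n k
    have hgint : ∫ y, p n y * p k y ∂μ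
        = ∑ j ∈ Finset.range (n+k+1), g n k j * ∫ y, p j y ∂μ := by
      rw [show (fun y => p n y * p k y)
        = fun y => ∑ j ∈ Finset.range (n+k+1), g n k j * p j y from funext (hg n k)]
      rw [integral_finset_sum _ (fun j _ => (hintp j).const_mul _)]
      exact Finset.sum_congr rfl (fun j _ => integral_const_mul _ _)
    have hsum : ∑ j ∈ Finset.range (n+k+1), g n k j * ∫ y, p j y ∂μ = g n k 0 := by
      rw [Finset.sum_eq_single 0]
      · rw [hip0, mul_one]
      · intro j _ hj
        rw [hip j hj, mul_zero]
      · intro h0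
        exact absurd (Finset.mem_range.mpr (by omega)) h0
    rw [hgint, hsum]
  have hγnn : ∀ k, 0 ≤ γ k := fun k => integral_nonneg (fun y => mul_self_nonneg _)
  have hγle1 : ∀ k, γ k ≤ 1 := by
    intro k
    calc γ k = g k k 0 := (hg0 k k).symm
      _ ≤ ∑ j ∈ Finset.range (k+k+1), g k k j :=
          Finset.single_le_sum (fun j _ => hgnn k k j) (Finset.mem_range.mpr (by omega))
      _ = 1 := hgsum k k
  have hγpos : ∀ k, 0 < γ k := by
    intro k
    induction k with
    | zero =>
      have : γ 0 = 1 := by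
        rw [hγ]; simp [hp0]
      rw [this]; norm_num
    | succ n ihn =>
      by_contra hnp
      have hz : γ (n+1) = 0 := le_antisymm (not_lt.mp hnp) (hγnn (n+1))
      have hae0 : (fun y => p (n+1) y) =ᵐ[μ] 0 := by
        have h2 : (fun y => p (n+1) y * p (n+1) y) =ᵐ[μ] 0 :=
          (integral_eq_zero_iff_of_nonneg (fun y => mul_self_nonneg _)
            (hint2 (n+1) (n+1))).mp hz
        filter_upwards [h2] with y hy
        exact mul_self_eq_zero.mp hy
      have hz2 : ∫ y, (a (n+1) * p (n+2) y + c (n+1) * p n y) * p n y ∂μ = 0 := by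
        have hae2 : (fun y => (a (n+1) * p (n+2) y + c (n+1) * p n y) * p n y) =ᵐ[μ] 0 := by
          filter_upwards [hae0] with y hy
          have hyz : p (n+1) y = 0 := hy
          have hr := hrec (n+1) (by omega) y
          simp only [Nat.add_sub_cancel] at hr
          have h3 : a (n+1) * p (n+2) y + c (n+1) * p n y
              = p 1 y * p (n+1) y - b (n+1) * p (n+1) y := by linarith
          simp only [Pi.zero_apply]
          rw [h3, hyz]
          ring
        rw [integral_congr_ae hae2]
        simp
      have hsplit : ∫ y, (a (n+1) * p (n+2) y + c (n+1) * p n y) * p n y ∂μ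
          = a (n+1) * ∫ y, p (n+2) y * p n y ∂μ + c (n+1) * γ n := by
        have hfe : (fun y => (a (n+1) * p (n+2) y + c (n+1) * p n y) * p n y)
            = fun y => a (n+1) * (p (n+2) y * p n y) + c (n+1) * (p n y * p n y) := by
          funext y; ring
        rw [hfe, integral_add ((hint2 (n+2) n).const_mul _) ((hint2 n n).const_mul _),
          integral_const_mul, integral_const_mul]
      rw [hsplit, horth (n+2) n (by omega), mul_zero, zero_add] at hz2
      have hcz := mul_eq_zero.mp hz2
      rcases hcz with hcz | hcz
      · exact (hc (n+1) (by omega)).ne' hcz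
      · exact ihn.ne' hcz
  have hoipos : ∀ j, 0 < ∫ y, Polynomial.eval y (P j) * Polynomial.eval y (P j) ∂μ := by
    intro j
    simp only [heval]
    exact hγpos j
  -- continuity of p 1
  have hp1c : Continuous (p 1) := by
    have hfe : (p 1) = fun y => (y - b 0)/(a 0) := funext hp1
    rw [hfe]
    exact (continuous_id.sub continuous_const).div_const _
  -- powers of p 1 as nonnegative combinations
  have hD : ∀ m : ℕ, ∃ D : ℕ → ℝ, (∀ j, 0 ≤ D j) ∧ (∑ j ∈ Finset.range (m+1), D j = 1)
      ∧ (∀ y, (p 1 y)^m = ∑ j ∈ Finset.range (m+1), D j * p j y) := by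
    intro m
    induction m with
    | zero =>
      refine ⟨fun j => if j = 0 then 1 else 0, fun j => by dsimp only; split_ifs <;> norm_num,
        by simp, fun y => by simp [hp0]⟩
    | succ m ihm =>
      obtain ⟨D, hD0, hDsum, hDev⟩ := ihm
      refine ⟨fun j => ∑ i ∈ Finset.range (m+1), D i * (if j < i+2 then g 1 i j else 0),
        ?_, ?_, ?_⟩
      · intro j
        apply Finset.sum_nonneg
        intro i _
        apply mul_nonneg (hD0 i)
        split_ifs
        · exact hgnn 1 i j
        · exact le_refl 0
      · rw [Finset.sum_comm]
        have hinner : ∀ i ∈ Finset.range (m+1),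
            ∑ j ∈ Finset.range (m+2), D i * (if j < i+2 then g 1 i j else 0) = D i := by
          intro i hi
          have him : i + 2 ≤ m + 2 := by
            have := Finset.mem_range.mp hi; omega
          rw [← Finset.mul_sum]
          have hsb : ∑ j ∈ Finset.range (m+2), (if j < i+2 then g 1 i j else 0)
              = ∑ j ∈ Finset.range (i+2), g 1 i j := by
            rw [← Finset.sum_subset (Finset.range_subset_range.mpr him)]
            · exact Finset.sum_congr rfl (fun j hj =>
                if_pos (Finset.mem_range.mp hj))
            · intro j _ hj
              exact if_neg (fun hlt => hj (Finset.mem_range.mpr hlt))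
          rw [hsb]
          have := hgsum 1 i
          rw [show 1 + i + 1 = i + 2 from by omega] at this
          rw [this, mul_one]
        rw [Finset.sum_congr rfl hinner, hDsum]
      · intro y
        have hstep : (p 1 y)^(m+1) = ∑ i ∈ Finset.range (m+1), D i * (p 1 y * p i y) := by
          rw [pow_succ, hDev y, Finset.sum_mul]
          exact Finset.sum_congr rfl (fun i _ => by ring)
        rw [hstep]
        have hterm : ∀ i ∈ Finset.range (m+1), D i * (p 1 y * p i y)
            = ∑ j ∈ Finset.range (m+2), D i * (if j < i+2 then g 1 i j else 0) * p j y := by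
          intro i hi
          have him : i + 2 ≤ m + 2 := by
            have := Finset.mem_range.mp hi; omega
          rw [hg 1 i y, show 1 + i + 1 = i + 2 from by omega]
          rw [Finset.mul_sum]
          rw [← Finset.sum_subset (Finset.range_subset_range.mpr him)]
          · apply Finset.sum_congr rfl
            intro j hj
            rw [if_pos (Finset.mem_range.mp hj)]
            ring
          · intro j _ hj
            rw [if_neg (fun hlt => hj (Finset.mem_range.mpr hlt)), mul_zero, zero_mul]
        rw [Finset.sum_congr rfl hterm, Finset.sum_comm]
        apply Finset.sum_congr rfl
        intro j _
        rw [Finset.sum_mul]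
  -- moment bound
  have hmom : ∀ m : ℕ, ∫ y, ((p 1 y)^m)^2 ∂μ ≤ 1 := by
    intro m
    obtain ⟨D, hD0, hDsum, hDev⟩ := hD m
    have hev2 : (fun y => ((p 1 y)^m)^2)
        = fun y => ∑ j ∈ Finset.range (m+1), ∑ i ∈ Finset.range (m+1),
            (D j * D i) * (p j y * p i y) := by
      funext y
      rw [sq, hDev y, Finset.sum_mul_sum]
      apply Finset.sum_congr rfl; intro j _
      apply Finset.sum_congr rfl; intro i _
      ring
    have hI : ∫ y, ((p 1 y)^m)^2 ∂μ = ∑ j ∈ Finset.range (m+1), (D j)^2 * γ j := by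
      rw [hev2, integral_finset_sum _ (fun j _ => integrable_finset_sum _
        (fun i _ => (hint2 j i).const_mul _))]
      apply Finset.sum_congr rfl
      intro j hjm
      rw [integral_finset_sum _ (fun i _ => (hint2 j i).const_mul _)]
      rw [Finset.sum_eq_single j]
      · rw [integral_const_mul, sq]
      · intro i _ hij
        rw [integral_const_mul, horth j i (fun hji => hij hji.symm), mul_zero]
      · intro hj; exact absurd hjm hj
    rw [hI]
    calc ∑ j ∈ Finset.range (m+1), (D j)^2 * γ j
        ≤ ∑ j ∈ Finset.range (m+1), (D j)^2 := by
          apply Finset.sum_le_sum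
          intro j _
          exact mul_le_of_le_one_right (sq_nonneg _) (hγle1 j)
      _ ≤ (∑ j ∈ Finset.range (m+1), D j)^2 :=
          Finset.sum_sq_le_sq_sum_of_nonneg (fun j _ => hD0 j)
      _ = 1 := by rw [hDsum]; norm_num
  -- a.e. bound on p 1
  have hEnull : ∀ δ : ℝ, 0 < δ → μ {y | 1 + δ ≤ |p 1 y|} = 0 := by
    intro δ hδ
    set E := {y : ℝ | 1 + δ ≤ |p 1 y|} with hE
    have hEm : MeasurableSet E :=
      (measurableSet_Ici (a := 1 + δ)).preimage (hp1c.abs.measurable)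
    by_contra hEne
    have hEpos : 0 < (μ E).toReal :=
      ENNReal.toReal_pos hEne (measure_ne_top μ E)
    have hb : ∀ m : ℕ, ((1+δ)^2)^m * (μ E).toReal ≤ 1 := by
      intro m
      have hind : ∀ y, E.indicator (fun _ => ((1+δ)^2)^m) y ≤ ((p 1 y)^m)^2 := by
        intro y
        by_cases hy : y ∈ E
        · rw [Set.indicator_of_mem hy]
          have h1y : (1+δ) ≤ |p 1 y| := hy
          have h2 : ((1+δ)^2)^m ≤ (|p 1 y|^2)^m := by
            apply pow_le_pow_left₀ (by positivity)
            exact pow_le_pow_left₀ (by linarith) h1y 2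
          calc ((1+δ)^2)^m ≤ (|p 1 y|^2)^m := h2
            _ = ((p 1 y)^m)^2 := by rw [sq_abs]; ring
        · rw [Set.indicator_of_notMem hy]
          positivity
      have hsqint : Integrable (fun y => ((p 1 y)^m)^2) μ := by
        have := hint ((P 1)^m * (P 1)^m)
        have hfe : (fun y => Polynomial.eval y ((P 1)^m * (P 1)^m))
            = fun y => ((p 1 y)^m)^2 := by
          funext y
          simp [eval_mul, eval_pow, heval, sq]
        rwa [hfe] at this
      have hIind : ∫ y, E.indicator (fun _ => ((1+δ)^2)^m) y ∂μ
          = ((1+δ)^2)^m * (μ E).toReal := by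
        rw [integral_indicator_const _ hEm]
        simp [mul_comm, Measure.real]
      calc ((1+δ)^2)^m * (μ E).toReal
          = ∫ y, E.indicator (fun _ => ((1+δ)^2)^m) y ∂μ := hIind.symm
        _ ≤ ∫ y, ((p 1 y)^m)^2 ∂μ :=
            integral_mono ((integrable_const _).indicator hEm) hsqint hind
        _ ≤ 1 := hmom m
    obtain ⟨m, hm⟩ := pow_unbounded_of_one_lt (1/(μ E).toReal)
      (by nlinarith : (1:ℝ) < (1+δ)^2)
    have hbm := hb m
    rw [div_lt_iff₀ hEpos] at hm
    nlinarith
  have haeabs : ∀ᵐ y ∂μ, |p 1 y| ≤ 1 := by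
    have hsubset : {y : ℝ | ¬ |p 1 y| ≤ 1}
        ⊆ ⋃ k : ℕ, {y : ℝ | 1 + 1/((k:ℝ)+1) ≤ |p 1 y|} := by
      intro y hy
      simp only [Set.mem_setOf_eq, not_le] at hy
      obtain ⟨k, hk⟩ := exists_nat_one_div_lt (show (0:ℝ) < |p 1 y| - 1 by linarith)
      exact Set.mem_iUnion.mpr ⟨k, by simp only [Set.mem_setOf_eq]; linarith⟩
    rw [ae_iff]
    apply measure_mono_null hsubset
    apply measure_iUnion_null
    intro k
    exact hEnull (1/((k:ℝ)+1)) (by positivity)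
  -- the interval [A, B₀]
  have hab1 : a 0 + b 0 = 1 := by
    have h1 := hnorm 1
    rw [hp1 1, div_eq_one_iff_eq (ha 0).ne'] at h1
    linarith
  obtain ⟨ε, hε, hball⟩ := Metric.isOpen_iff.mp hUopen 1 hU1
  have hUnull : ∀ᵐ y ∂μ, y ∉ U := by
    rw [ae_iff]
    have hfe : {y : ℝ | ¬ y ∉ U} = U := by ext y; simp
    rw [hfe]
    exact hU0
  set A : ℝ := b 0 - a 0 with hA
  set B₀ : ℝ := 1 - ε with hB₀
  have haeI : ∀ᵐ y ∂μ, y ∈ Set.Icc A B₀ := by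
    filter_upwards [haeabs, hUnull] with y h1y h2y
    rw [hp1, abs_div, abs_of_pos (ha 0), div_le_one (ha 0)] at h1y
    have hy2 := abs_le.mp h1y
    have hyle : y ≤ 1 := by linarith [hy2.2, hab1]
    have hynb : y ∉ Metric.ball 1 ε := fun hmem => h2y (hball hmem)
    rw [Metric.mem_ball, Real.dist_eq, not_lt] at hynb
    have habs1 : |y - 1| = 1 - y := by
      rw [abs_of_nonpos (by linarith)]; ring
    rw [habs1] at hynb
    exact Set.mem_Icc.mpr ⟨by linarith [hy2.1], by linarith⟩
  have hAB : A ≤ B₀ := by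
    by_contra hcon
    push_neg at hcon
    have hFalse : ∀ᵐ y ∂μ, False := by
      filter_upwards [haeI] with y hy
      have := hy.1
      have := hy.2
      linarith
    have h0 : μ Set.univ = 0 := by simpa [ae_iff] using hFalse
    have : (1 : ENNReal) = 0 := by rw [← measure_univ (μ := μ), h0]
    norm_num at this
  have hB1 : B₀ < 1 := by rw [hB₀]; linarith
  set x : ℝ := 1 - ε/2 with hx
  have hxB : B₀ < x := by rw [hB₀, hx]; linarith
  have hx1 : x < 1 := by rw [hx]; linarith
  set ρ : ℝ := (x - A)/(1 - A) with hρ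
  have hA1 : A < 1 := lt_of_le_of_lt hAB hB1
  have hρ0 : 0 ≤ ρ := div_nonneg (by linarith) (by linarith)
  have hρ1 : ρ < 1 := (div_lt_one (by linarith)).mpr (by linarith)
  have hpb : ∀ n, |p n x| ≤ ρ ^ n := by
    intro n
    have := rootbound hdeg hlc hint hoi hoipos hAB hB1 haeI n
      (by rw [heval]; exact hnorm n) hxB hx1
    rwa [heval] at this
  -- Christoffel bound
  have hγh : ∀ k, h k = (γ k)⁻¹ := by
    intro k
    rw [hh]
    congr 1
    apply integral_congr_ae
    apply Eventually.of_forall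
    intro y
    show (p k y)^2 = p k y * p k y
    ring
  set S : ℕ → ℝ := fun N => ∑ k ∈ Finset.range (N+1), h k * (p k x)^2 with hS
  set r : ℝ := (x - A + 1)/(B₀ - A + 1) with hr
  have hr1 : 1 < r := by
    rw [hr]
    apply (one_lt_div (by linarith)).mpr
    linarith
  have hSlb : ∀ N, r^(2*N) ≤ S N := by
    intro N
    have hch := christoffel hdeg hlc hint hoi hoipos hAB hxB haeI N
    rw [← hr] at hch
    calc r^(2*N) ≤ ∑ k ∈ Finset.range (N+1),
          (∫ y, Polynomial.eval y (P k) * Polynomial.eval y (P k) ∂μ)⁻¹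
            * (Polynomial.eval x (P k))^2 := hch
      _ = S N := by
          apply Finset.sum_congr rfl
          intro k _
          rw [hγh k, heval]
          congr 2
          simp only [heval]
          rfl
  have hSnn : ∀ N, 0 ≤ S N := by
    intro N
    apply Finset.sum_nonneg
    intro k _
    apply mul_nonneg _ (sq_nonneg _)
    rw [hγh k]
    exact inv_nonneg.mpr (hγpos k).le
  -- bounded sequences
  have hple1 : ∀ k, |p k x| ≤ 1 := fun k => (hpb k).trans (pow_le_one₀ hρ0 hρ1.le)
  set αx : BoundedContinuousFunction ℕ ℝ :=
    BoundedContinuousFunction.mkOfBound ⟨fun k => p k x, continuous_of_discreteTopology⟩ 2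
      (by
        intro s t
        rw [Real.dist_eq]
        calc |p s x - p t x| ≤ |p s x| + |p t x| := abs_sub _ _
          _ ≤ 1 + 1 := add_le_add (hple1 s) (hple1 t)
          _ = 2 := by norm_num) with hαxdef
  have hαx : ∀ n, αx n = p n x := fun n => rfl
  have hαne : αx ≠ 1 := by
    intro hone
    have h1x : p 1 x = 1 := by
      calc p 1 x = αx 1 := (hαx 1).symm
        _ = (1 : BoundedContinuousFunction ℕ ℝ) 1 := by rw [hone]
        _ = 1 := rfl
    rw [hp1] at h1x
    rw [div_eq_one_iff_eq (ha 0).ne'] at h1x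
    linarith
  obtain ⟨m, hm, -⟩ := hamen x αx hαx hαne
  set e : ℕ → BoundedContinuousFunction ℕ ℝ := fun j =>
    BoundedContinuousFunction.mkOfBound
      ⟨fun k => if k = j then (1:ℝ) else 0, continuous_of_discreteTopology⟩ 2
      (by
        intro s t
        simp only [ContinuousMap.coe_mk, Real.dist_eq]
        split_ifs <;> norm_num) with he
  have heapp : ∀ j k, e j k = if k = j then (1:ℝ) else 0 := fun j k => rfl
  have hme : ∀ nn, γ nn * m (e nn) = p nn x * m (e 0) := by
    intro nn
    have hTf : ∀ k, (γ nn • e nn) k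
        = ∑ j ∈ Finset.range (nn + k + 1), g nn k j * (e 0) j := by
      intro k
      have hrhs : ∑ j ∈ Finset.range (nn + k + 1), g nn k j * (e 0) j = g nn k 0 := by
        rw [Finset.sum_eq_single 0]
        · rw [heapp]; norm_num
        · intro j _ hj
          rw [heapp]
          rw [if_neg hj, mul_zero]
        · intro h0
          exact absurd (Finset.mem_range.mpr (by omega)) h0
      rw [hrhs, hg0 nn k]
      have hlhs : (γ nn • e nn) k = γ nn * (if k = nn then (1:ℝ) else 0) := by
        rw [BoundedContinuousFunction.smul_apply, heapp, smul_eq_mul]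
      rw [hlhs]
      by_cases hk : k = nn
      · subst hk
        rw [if_pos rfl, mul_one]
      · rw [if_neg hk, mul_zero, horth nn k (fun hnk => hk hnk.symm)]
    have hcond := hm.2 nn (e 0) (γ nn • e nn) hTf
    rw [m.map_smul, smul_eq_mul, hαx nn] at hcond
    exact hcond
  have hmek : ∀ k, m (e k) = (p k x * m (e 0)) / γ k := by
    intro k
    rw [eq_div_iff (hγpos k).ne', mul_comm (m (e k)) (γ k)]
    exact hme k
  set F : ℕ → BoundedContinuousFunction ℕ ℝ :=
    fun N => ∑ k ∈ Finset.range (N+1), p k x • e k with hF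
  have hmF : ∀ N, m (F N) = S N * m (e 0) := by
    intro N
    rw [hF, map_sum, hS]
    rw [Finset.sum_mul]
    apply Finset.sum_congr rfl
    intro k _
    rw [m.map_smul, smul_eq_mul, hmek k, hγh k]
    field_simp
  have hFapp : ∀ N k, (F N) k = if k ≤ N then p k x else 0 := by
    intro N k
    rw [hF, BoundedContinuousFunction.coe_sum, Finset.sum_apply]
    have hterm : ∀ j ∈ Finset.range (N+1), (p j x • e j) k
        = if k = j then p j x else 0 := by
      intro j _
      rw [BoundedContinuousFunction.smul_apply, heapp, smul_eq_mul]
      split_ifs <;> norm_num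
    rw [Finset.sum_congr rfl hterm, Finset.sum_ite_eq (Finset.range (N+1)) k]
    simp only [Finset.mem_range]
    by_cases hk : k ≤ N
    · rw [if_pos (by omega), if_pos hk]
    · rw [if_neg (by omega), if_neg hk]
  have hFnorm : ∀ N, ‖F N‖ ≤ 1 := by
    intro N
    apply (BoundedContinuousFunction.norm_le (by norm_num)).mpr
    intro k
    rw [hFapp N k, Real.norm_eq_abs]
    split_ifs
    · exact hple1 k
    · norm_num
  have hme0 : m (e 0) = 0 := by
    by_contra hne0
    have h0 : 0 < |m (e 0)| := abs_pos.mpr hne0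
    have habs : ∀ N, S N * |m (e 0)| ≤ ‖m‖ := by
      intro N
      have h2 : ‖m (F N)‖ ≤ ‖m‖ * ‖F N‖ := m.le_opNorm _
      have h3 : ‖m (F N)‖ ≤ ‖m‖ := by
        calc ‖m (F N)‖ ≤ ‖m‖ * ‖F N‖ := h2
          _ ≤ ‖m‖ * 1 := by
              apply mul_le_mul_of_nonneg_left (hFnorm N) (norm_nonneg m)
          _ = ‖m‖ := mul_one _
      calc S N * |m (e 0)| = |S N * m (e 0)| := by
            rw [abs_mul, abs_of_nonneg (hSnn N)]
        _ = ‖m (F N)‖ := by rw [← hmF N, Real.norm_eq_abs]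
        _ ≤ ‖m‖ := h3
    obtain ⟨NN, hNN⟩ := pow_unbounded_of_one_lt (‖m‖ / |m (e 0)|) hr1
    have hS2 : ‖m‖ / |m (e 0)| < S NN :=
      lt_of_lt_of_le hNN (le_trans (pow_le_pow_right₀ hr1.le (by omega)) (hSlb NN))
    rw [div_lt_iff₀ h0] at hS2
    linarith [habs NN]
  have hmα : m αx = 0 := by
    have hbN : ∀ N : ℕ, |m αx| ≤ ‖m‖ * ρ^(N+1) := by
      intro N
      have hmFN : m (F N) = 0 := by rw [hmF N, hme0, mul_zero]
      have hdiff : m αx = m (αx - F N) := by rw [map_sub, hmFN, sub_zero]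
      rw [hdiff]
      have hnd : ‖αx - F N‖ ≤ ρ^(N+1) := by
        apply (BoundedContinuousFunction.norm_le (by positivity)).mpr
        intro k
        rw [BoundedContinuousFunction.sub_apply, hFapp N k, Real.norm_eq_abs]
        by_cases hk : k ≤ N
        · rw [if_pos hk]
          simp only [hαx k, sub_self, abs_zero]
          positivity
        · rw [if_neg hk, sub_zero, hαx k]
          calc |p k x| ≤ ρ^k := hpb k
            _ ≤ ρ^(N+1) := pow_le_pow_of_le_one hρ0 hρ1.le (by omega)
      calc |m (αx - F N)| = ‖m (αx - F N)‖ := (Real.norm_eq_abs _).symm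
        _ ≤ ‖m‖ * ‖αx - F N‖ := m.le_opNorm _
        _ ≤ ‖m‖ * ρ^(N+1) := mul_le_mul_of_nonneg_left hnd (norm_nonneg m)
    by_contra hne
    have hgt : 0 < |m αx| := abs_pos.mpr hne
    have hnormpos : 0 < ‖m‖ := by
      rcases (norm_nonneg m).lt_or_eq with hlt | heq
      · exact hlt
      · exfalso
        have hb0 := hbN 0
        rw [← heq, zero_mul] at hb0
        linarith
    obtain ⟨N, hN⟩ := exists_pow_lt_of_lt_one (div_pos hgt hnormpos) hρ1
    have hcon : |m αx| ≤ ‖m‖ * ρ^(N+1) := hbN N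
    have hstep : ρ^(N+1) ≤ ρ^N := pow_le_pow_of_le_one hρ0 hρ1.le (by omega)
    rw [lt_div_iff₀ hnormpos] at hN
    have hcomm : ρ^N * ‖m‖ = ‖m‖ * ρ^N := mul_comm _ _
    have hmono : ‖m‖ * ρ^(N+1) ≤ ‖m‖ * ρ^N :=
      mul_le_mul_of_nonneg_left hstep (norm_nonneg m)
    linarith
  rw [hm.1] at hmα
  norm_num at hmα
end
end

section
/- Every character α of the symmetric hypergroup with α ≠ 1 has finite support; in particular Σ_{n≥0} c_n·|α(n)| < ∞ and Σ_{n≥0} c_n·α(n)² < ∞ (every nontrivial character belongs to ℓ¹ and ℓ² with respect to the Haar weights c_n). -/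
open Filter Topology

noncomputable section

/-- `Tf` is the translate by `n` of `f` in the symmetric hypergroup on `ℕ₀`
with parameters `b`, `c`:  `(T_n f)(k) = f(max n k)` for `k ≠ n`,
`T_0 f = f`, and `(T_n f)(n) = Σ_{k<n} (c_k/c_n) f(k) + (1 - b_n) f(n)`
for `n ≥ 1`. -/
def IsSymTranslate (b c : ℕ → ℝ) (n : ℕ)
    (f Tf : BoundedContinuousFunction ℕ ℝ) : Prop :=
  (∀ k : ℕ, k ≠ n → Tf k = f (max n k)) ∧
  (n = 0 → Tf 0 = f 0) ∧
  (1 ≤ n → Tf n = (∑ k ∈ Finset.range n, (c k / c n) * f k) + (1 - b n) * f n)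

/-- A character of the symmetric hypergroup: a bounded function `α : ℕ → ℝ`,
not identically `0`, with `α(max n k) = α(n)α(k)` for `n ≠ k` and
`Σ_{k<n} (c_k/c_n) α(k) + (1 - b_n) α(n) = α(n)²` for `n ≥ 1`. -/
def IsSymCharacter (b c : ℕ → ℝ) (α : BoundedContinuousFunction ℕ ℝ) : Prop :=
  α ≠ 0 ∧
  (∀ n k : ℕ, n ≠ k → α (max n k) = α n * α k) ∧
  ∀ n : ℕ, 1 ≤ n →
    (∑ k ∈ Finset.range n, (c k / c n) * α k) + (1 - b n) * α n = (α n) ^ 2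

/-- `m` is an `α`-mean on `ℓ∞(ℕ₀)` for the symmetric hypergroup:
`m(α) = 1` and `m(T_n f) = α(n) m(f)` for all `n` and bounded `f`. -/
def IsSymMean (b c : ℕ → ℝ) (α : BoundedContinuousFunction ℕ ℝ)
    (m : BoundedContinuousFunction ℕ ℝ →L[ℝ] ℝ) : Prop :=
  m α = 1 ∧
    ∀ (n : ℕ) (f Tf : BoundedContinuousFunction ℕ ℝ),
      IsSymTranslate b c n f Tf → m Tf = α n * m f

theorem stmt15    (b c : ℕ → ℝ)
    (hb : ∀ n : ℕ, 1 ≤ n → b n ∈ Set.Ioc (0 : ℝ) 1)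
    (hc0 : c 0 = 1)
    (hcrec : ∀ n : ℕ, 1 ≤ n → c n = (1 / b n) * ∑ k ∈ Finset.range n, c k)
    (α : BoundedContinuousFunction ℕ ℝ)
    (hα : IsSymCharacter b c α)
    (hne : α ≠ 1) :
    (Function.support fun n : ℕ => α n).Finite ∧
      Summable (fun n : ℕ => c n * |α n|) ∧
      Summable (fun n : ℕ => c n * (α n) ^ 2) := by
  obtain ⟨-, hmul, -⟩ := hα
  have hN : ∃ N, α N ≠ 1 := by
    by_contra h
    push_neg at h
    exact hne (BoundedContinuousFunction.ext fun n => by simpa using h n)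
  obtain ⟨N, hN⟩ := hN
  have hzero : ∀ m, N < m → α m = 0 := by
    intro m hm
    have h1 := hmul N m (Nat.ne_of_lt hm)
    rw [max_eq_right hm.le] at h1
    have h2 : (1 - α N) * α m = 0 := by ring_nf; linarith [h1]
    rcases mul_eq_zero.mp h2 with h | h
    · exact absurd (by linarith) hN
    · exact h
  refine ⟨?_, ?_, ?_⟩
  · apply Set.Finite.subset (Set.finite_Iic N)
    intro n hn
    simp only [Function.mem_support] at hn
    by_contra h
    exact hn (hzero n (by simpa using h))
  · apply summable_of_ne_finset_zero (s := Finset.range (N + 1))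
    intro n hn
    have : N < n := by simpa [Nat.lt_succ_iff] using hn
    simp [hzero n this]
  · apply summable_of_ne_finset_zero (s := Finset.range (N + 1))
    intro n hn
    have : N < n := by simpa [Nat.lt_succ_iff] using hn
    simp [hzero n this]
end
end
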